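/- arXiv:1509.06418 — 2 statements merged into one kernel-verified Lean document; each statement's English description precedes it below -/
import Mathlib

section
/- Consider a homogeneous weighted stochastic block model with two communities, each of size n: nodes are partitioned into communities A and B of size n each, and each edge weight W_{ij} is drawn independently from a discrete distribution p_n on the natural numbers if nodes i and j lie in the same community, and from a discrete distribution q_n on the natural numbers otherwise. Let I = -2 log ( Σ_{ℓ ≥ 0} √(p_n(ℓ) q_n(ℓ)) ) denote the Renyi divergence of order 1/2 between p_n and q_n. Then the probability that the maximum likelihood estimator fails to recover the true community partition satisfies P(F) ≤ Σ_{k=1}^{n/2} exp( 2k(log(n/k) + 1) − 2k(n−k) I ). -/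
/-!
STATEMENT 0: In the homogeneous weighted stochastic block model with two communities of
size `n` and discrete edge-weight distributions `p` (within-community) and `q`
(between-community) on ℕ, the probability that maximum likelihood fails to recover the
true partition is at most
`∑_{k=1}^{n/2} exp( 2k(log(n/k) + 1) − 2k(n−k) I )`,
where `I` is the Renyi divergence of order 1/2 between `p` and `q`.
-/

open MeasureTheory Filter
open scoped ENNReal

namespace SBM0

/-- Edges of the complete graph on the `2 n` vertices, as ordered pairs `(i, j)` with `i < j`. -/
abbrev Edge (n : ℕ) := {e : Fin (2 * n) × Fin (2 * n) // e.1 < e.2}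

/-- The ground-truth community assignment: the first `n` vertices form community `A`
(`true`), the remaining `n` vertices form community `B` (`false`). -/
def truth (n : ℕ) (i : Fin (2 * n)) : Bool := decide (i.val < n)

/-- The distribution of the weight of a single edge: `p` for within-community edges,
`q` for between-community edges. -/
noncomputable def edgeMeasure (n : ℕ) (p q : PMF ℕ) (e : Edge n) : Measure ℕ :=
  if truth n e.1.1 = truth n e.1.2 then p.toMeasure else q.toMeasure

/-- The law of the weighted random graph: all edge weights independent. -/
noncomputable def sbm (n : ℕ) (p q : PMF ℕ) : Measure (Edge n → ℕ) :=
  Measure.pi (edgeMeasure n p q)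

/-- Likelihood of the observed weight matrix `w` under the community assignment `σ`. -/
noncomputable def likelihood (n : ℕ) (p q : PMF ℕ) (σ : Fin (2 * n) → Bool)
    (w : Edge n → ℕ) : ℝ≥0∞ :=
  ∏ e : Edge n, if σ e.1.1 = σ e.1.2 then p (w e) else q (w e)

/-- A community assignment is balanced if each community has exactly `n` nodes. -/
def balanced (n : ℕ) (σ : Fin (2 * n) → Bool) : Prop :=
  (Finset.univ.filter fun i => σ i = true).card = n

/-- `σ` coincides with the true partition (as a partition, i.e. up to swapping the
two community labels). -/
def equivTruth (n : ℕ) (σ : Fin (2 * n) → Bool) : Prop :=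
  σ = truth n ∨ σ = fun i => !(truth n i)

/-- Failure event of maximum likelihood: some balanced assignment that is not the true
partition has likelihood at least that of the truth, so that a maximum likelihood
estimate need not coincide with the truth. -/
def failEvent (n : ℕ) (p q : PMF ℕ) : Set (Edge n → ℕ) :=
  {w | ∃ σ, balanced n σ ∧ ¬ equivTruth n σ ∧
    likelihood n p q (truth n) w ≤ likelihood n p q σ w}

/-- The Renyi divergence of order 1/2 between two discrete distributions on ℕ. -/
noncomputable def renyi (p q : PMF ℕ) : ℝ :=
  -2 * Real.log (∑' ℓ : ℕ, Real.sqrt ((p ℓ).toReal * (q ℓ).toReal))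

section Aux

-- tsum over pi type of products (Fin version)
lemma tsum_pi_fin : ∀ (m : ℕ) (f : Fin m → ℕ → ℝ≥0∞),
    (∑' w : Fin m → ℕ, ∏ i, f i (w i)) = ∏ i, ∑' x, f i x := by
  intro m
  induction m with
  | zero =>
    intro f
    simp only [Finset.univ_eq_empty, Finset.prod_empty]
    rw [tsum_eq_single (fun (i : Fin 0) => 0)]
    intro b hb; exact absurd (funext fun i => i.elim0) hb
  | succ n ih =>
    intro f
    rw [← (Fin.consEquiv (fun _ : Fin (n+1) => ℕ)).tsum_eq]
    simp only [Fin.consEquiv_apply]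
    rw [ENNReal.tsum_prod']
    simp only [Fin.prod_univ_succ, Fin.cons_zero, Fin.cons_succ]
    calc (∑' (x : ℕ) (v : Fin n → ℕ), f 0 x * ∏ i : Fin n, f i.succ (v i))
        = ∑' (x : ℕ), f 0 x * ∑' (v : Fin n → ℕ), ∏ i : Fin n, f i.succ (v i) := by
          congr 1; ext x; rw [ENNReal.tsum_mul_left]
      _ = (∑' x, f 0 x) * ∑' (v : Fin n → ℕ), ∏ i : Fin n, f i.succ (v i) := by
          rw [ENNReal.tsum_mul_right]
      _ = (∑' x, f 0 x) * ∏ i : Fin n, ∑' x, f i.succ x := by rw [ih]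

lemma tsum_pi {ι : Type*} [Fintype ι] (f : ι → ℕ → ℝ≥0∞) :
    (∑' w : ι → ℕ, ∏ i, f i (w i)) = ∏ i, ∑' x, f i x := by
  classical
  let e := Fintype.equivFin ι
  have h1 : (∑' w : ι → ℕ, ∏ i, f i (w i))
      = ∑' v : Fin (Fintype.card ι) → ℕ, ∏ i : ι, f i (v (e i)) := by
    rw [← (Equiv.arrowCongr e.symm (Equiv.refl ℕ)).tsum_eq (fun w : ι → ℕ => ∏ i, f i (w i))]
    rfl
  rw [h1]
  have h2 : ∀ v : Fin (Fintype.card ι) → ℕ,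
      (∏ i : ι, f i (v (e i))) = ∏ j, f (e.symm j) (v j) := by
    intro v
    rw [← e.prod_comp (fun j => f (e.symm j) (v j))]
    simp
  simp_rw [h2]
  rw [tsum_pi_fin]
  rw [← e.prod_comp (fun j => ∑' x, f (e.symm j) x)]
  simp

lemma one_add_inv_pow_le (k : ℕ) (hk : 1 ≤ k) :
    (1 + 1 / (k:ℝ)) ^ k ≤ Real.exp 1 := by
  have hk0 : (0:ℝ) < k := by positivity
  have h1 : (1 + 1/(k:ℝ)) ≤ Real.exp (1/k) := by
    have := Real.add_one_le_exp (1/(k:ℝ)); linarith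
  have h2 : (1 + 1/(k:ℝ))^k ≤ Real.exp (1/k) ^ k := by
    apply pow_le_pow_left₀ (by positivity) h1
  calc (1 + 1/(k:ℝ))^k ≤ Real.exp (1/k) ^ k := h2
    _ = Real.exp ((1/k) * k) := by rw [← Real.exp_nat_mul]; ring_nf
    _ = Real.exp 1 := by rw [one_div, inv_mul_cancel₀ (ne_of_gt hk0)]

lemma factorial_ge (k : ℕ) (hk : 1 ≤ k) :
    Real.exp 1 * ((k:ℝ) / Real.exp 1) ^ k ≤ (k.factorial : ℝ) := by
  induction k with
  | zero => omega
  | succ m ih =>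
    rcases Nat.eq_or_lt_of_le hk with h1 | h2
    · have hm1 : m = 0 := by omega
      subst hm1
      have : Real.exp 1 * ((1:ℝ)/Real.exp 1)^1 = 1 := by
        field_simp
      simpa [Nat.factorial] using this.le
    · have hm : 1 ≤ m := by omega
      have ihm := ih hm
      have he : (0:ℝ) < Real.exp 1 := Real.exp_pos 1
      have hm0 : (0:ℝ) < m := by positivity
      have key : ((m+1:ℝ) / Real.exp 1) ^ (m+1) ≤ ((m:ℝ)/Real.exp 1)^m * (m+1) := by
        have e1 : ((m+1:ℝ)/Real.exp 1)^(m+1) = ((m+1:ℝ)/Real.exp 1)^m * ((m+1)/Real.exp 1) := by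
          ring
        have e2 : ((m+1:ℝ)/Real.exp 1)^m = ((m:ℝ)/Real.exp 1)^m * (1 + 1/(m:ℝ))^m := by
          rw [← mul_pow]; congr 1; field_simp
        rw [e1, e2]
        have h3 : ((m:ℝ)/Real.exp 1)^m * (1 + 1/(m:ℝ))^m * ((m+1)/Real.exp 1)
            ≤ ((m:ℝ)/Real.exp 1)^m * Real.exp 1 * ((m+1)/Real.exp 1) := by
          apply mul_le_mul_of_nonneg_right _ (by positivity)
          apply mul_le_mul_of_nonneg_left (one_add_inv_pow_le m hm) (by positivity)
        calc ((m:ℝ)/Real.exp 1)^m * (1 + 1/(m:ℝ))^m * ((m+1)/Real.exp 1)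
            ≤ ((m:ℝ)/Real.exp 1)^m * Real.exp 1 * ((m+1)/Real.exp 1) := h3
          _ = ((m:ℝ)/Real.exp 1)^m * (m+1) := by
              field_simp
      have : Real.exp 1 * ((m+1:ℝ)/Real.exp 1)^(m+1) ≤ Real.exp 1 * (((m:ℝ)/Real.exp 1)^m * (m+1)) :=
        mul_le_mul_of_nonneg_left key he.le
      push_cast
      calc Real.exp 1 * (((m:ℝ)+1)/Real.exp 1)^(m+1)
          ≤ Real.exp 1 * (((m:ℝ)/Real.exp 1)^m * (m+1)) := this
        _ = (Real.exp 1 * ((m:ℝ)/Real.exp 1)^m) * (m+1) := by ring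
        _ ≤ (m.factorial : ℝ) * (m+1) := by
            apply mul_le_mul_of_nonneg_right ihm (by positivity)
        _ = (((m+1).factorial : ℕ) : ℝ) := by rw [Nat.factorial_succ]; push_cast; ring

lemma choose_bound (n k : ℕ) (hk : 1 ≤ k) (hkn : k ≤ n) :
    2 * (n.choose k : ℝ)^2 ≤ Real.exp (2*(k:ℝ)*(Real.log ((n:ℝ)/(k:ℝ)) + 1)) := by
  have hn : 1 ≤ n := le_trans hk hkn
  have hk0 : (0:ℝ) < k := by positivity
  have hn0 : (0:ℝ) < n := by exact_mod_cast Nat.lt_of_lt_of_le (by omega) hn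
  set E := Real.exp 1 with hE
  have hE0 : (0:ℝ) < E := Real.exp_pos 1
  have hE2 : (2:ℝ) ≤ E := by
    have := Real.add_one_le_exp (1:ℝ); linarith
  have hfac : E * ((k:ℝ)/E)^k ≤ (k.factorial : ℝ) := factorial_ge k hk
  have hfacpos : (0:ℝ) < E * ((k:ℝ)/E)^k := by positivity
  have hchoose : (n.choose k : ℝ) ≤ (n:ℝ)^k / (k.factorial : ℝ) := by
    have := Nat.choose_le_pow_div k n (α := ℝ)
    simpa using this
  have hchoose2 : (n.choose k : ℝ) ≤ (n:ℝ)^k / (E * ((k:ℝ)/E)^k) := by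
    refine le_trans hchoose ?_
    apply div_le_div_of_nonneg_left (by positivity) hfacpos hfac
  have hD : (n:ℝ)^k / (E * ((k:ℝ)/E)^k) = ((n:ℝ)/k)^k * E^k / E := by
    rw [div_pow, div_pow]
    field_simp
  rw [hD] at hchoose2
  have hRHS : Real.exp (2*(k:ℝ)*(Real.log ((n:ℝ)/(k:ℝ)) + 1)) = (((n:ℝ)/k)^k)^2 * (E^k)^2 := by
    have h1 : 2*(k:ℝ)*(Real.log ((n:ℝ)/(k:ℝ)) + 1) = (2*k)*Real.log ((n:ℝ)/k) + (2*k)*1 := by ring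
    rw [h1, Real.exp_add]
    have h2 : Real.exp ((2*(k:ℝ))*Real.log ((n:ℝ)/k)) = ((n:ℝ)/k)^(2*k) := by
      rw [show ((2*(k:ℝ))) = ((2*k : ℕ) : ℝ) by push_cast; ring]
      rw [← Real.rpow_natCast ((n:ℝ)/k) (2*k), Real.rpow_def_of_pos (by positivity)]
      ring_nf
    have h3 : Real.exp ((2*(k:ℝ))*1) = E^(2*k) := by
      rw [← Real.exp_nat_mul]; congr 1; push_cast; ring
    rw [h2, h3, pow_mul, pow_mul]
    ring
  rw [hRHS]
  have hC0 : (0:ℝ) ≤ (n.choose k : ℝ) := by positivity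
  set a := ((n:ℝ)/k)^k with ha
  set b := E^k with hb
  have ha0 : 0 < a := by positivity
  have hb0 : 0 < b := by positivity
  have h4 : (n.choose k : ℝ)^2 ≤ (a * b / E)^2 := by
    apply pow_le_pow_left₀ hC0 hchoose2
  have h5 : 2 * (a*b/E)^2 ≤ a^2 * b^2 := by
    rw [div_pow, mul_pow, mul_div_assoc', div_le_iff₀ (by positivity : (0:ℝ) < E^2)]
    have hE4 : (4:ℝ) ≤ E^2 := by nlinarith
    nlinarith [mul_pos (mul_pos ha0 ha0) (mul_pos hb0 hb0), hE4]
  linarith [mul_le_mul_of_nonneg_left h4 (by norm_num : (0:ℝ) ≤ 2)]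

lemma real_key (n k : ℕ) (hk : 1 ≤ k) (h2k : 2*k ≤ n) (r : ℝ) (hr : 0 ≤ r) :
    2 * (n.choose k:ℝ)^2 * r ^ (4*k*(n-k)) ≤
      Real.exp (2*(k:ℝ)*(Real.log ((n:ℝ)/(k:ℝ)) + 1)
        - 2*(k:ℝ)*((n:ℝ)-(k:ℝ)) * (-2 * Real.log r)) := by
  have hkn : k ≤ n := by omega
  have hnk : 1 ≤ n - k := by omega
  rw [Real.exp_sub]
  have hmain : r ^ (4*k*(n-k)) ≤ Real.exp (-(2*(k:ℝ)*((n:ℝ)-(k:ℝ)) * (-2 * Real.log r))) := by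
    rcases eq_or_lt_of_le hr with h0 | hpos
    · rw [← h0]
      rw [zero_pow (by positivity)]
      positivity
    · have : Real.exp (-(2*(k:ℝ)*((n:ℝ)-(k:ℝ)) * (-2 * Real.log r)))
          = Real.exp (((4*k*(n-k) : ℕ) : ℝ) * Real.log r) := by
        congr 1
        push_cast [hkn]
        ring
      rw [this, Real.exp_nat_mul, Real.exp_log hpos]
  calc 2 * (n.choose k:ℝ)^2 * r ^ (4*k*(n-k))
      ≤ Real.exp (2*(k:ℝ)*(Real.log ((n:ℝ)/(k:ℝ)) + 1)) *
        Real.exp (-(2*(k:ℝ)*((n:ℝ)-(k:ℝ)) * (-2 * Real.log r))) := by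
        apply mul_le_mul (choose_bound n k hk hkn) hmain (by positivity) (by positivity)
    _ = _ := by rw [Real.exp_neg]; exact (div_eq_mul_inv _ _).symm

end Aux

noncomputable def rho (p q : PMF ℕ) : ℝ≥0∞ :=
  ∑' x : ℕ, (p x) ^ ((1:ℝ)/2) * (q x) ^ ((1:ℝ)/2)

noncomputable def nu (n : ℕ) (p q : PMF ℕ) (σ : Fin (2 * n) → Bool) (e : Edge n) :
    ℕ → ℝ≥0∞ := fun x => if σ e.1.1 = σ e.1.2 then p x else q x


lemma likelihood_eq (n : ℕ) (p q : PMF ℕ) (σ : Fin (2 * n) → Bool) (w : Edge n → ℕ) :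
    likelihood n p q σ w = ∏ e : Edge n, nu n p q σ e (w e) := rfl

lemma nu_le_one (n : ℕ) (p q : PMF ℕ) (σ : Fin (2 * n) → Bool) (e : Edge n) (x : ℕ) :
    nu n p q σ e x ≤ 1 := by
  unfold nu; split <;> exact PMF.coe_le_one _ _

lemma nu_ne_top (n : ℕ) (p q : PMF ℕ) (σ : Fin (2 * n) → Bool) (e : Edge n) (x : ℕ) :
    nu n p q σ e x ≠ ∞ := (lt_of_le_of_lt (nu_le_one n p q σ e x) ENNReal.one_lt_top).ne

lemma tsum_sq (m : PMF ℕ) : ∑' x : ℕ, (m x) ^ ((1:ℝ)/2) * (m x) ^ ((1:ℝ)/2) = 1 := by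
  have : ∀ x : ℕ, (m x) ^ ((1:ℝ)/2) * (m x) ^ ((1:ℝ)/2) = m x := by
    intro x
    rw [← ENNReal.rpow_add_of_nonneg _ _ (by norm_num) (by norm_num)]
    norm_num
  simp_rw [this]
  exact m.tsum_coe

noncomputable def hfun (n : ℕ) (p q : PMF ℕ) (σ : Fin (2 * n) → Bool) (e : Edge n) :
    ℕ → ℝ≥0∞ := fun x => (nu n p q (truth n) e x) ^ ((1:ℝ)/2) * (nu n p q σ e x) ^ ((1:ℝ)/2)

lemma tsum_hfun (n : ℕ) (p q : PMF ℕ) (σ : Fin (2 * n) → Bool) (e : Edge n) :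
    ∑' x : ℕ, hfun n p q σ e x
      = if ((truth n e.1.1 = truth n e.1.2) ↔ (σ e.1.1 = σ e.1.2)) then 1 else rho p q := by
  have ep : ∀ (m : PMF ℕ) (c : Prop) [Decidable c] (hc : c),
      (fun x : ℕ => ((if c then (p x : ℝ≥0∞) else q x)) ) = p := by
    intro m c _ hc; funext x; rw [if_pos hc]
  by_cases h1 : truth n e.1.1 = truth n e.1.2 <;> by_cases h2 : σ e.1.1 = σ e.1.2
  · rw [if_pos (iff_of_true h1 h2)]
    unfold hfun nu
    simp only [if_pos h1, if_pos h2]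
    exact tsum_sq p
  · rw [if_neg (fun hiff => h2 (hiff.mp h1))]
    unfold hfun nu
    simp only [if_pos h1, if_neg h2]
    rfl
  · rw [if_neg (fun hiff => h1 (hiff.mpr h2))]
    unfold hfun nu
    simp only [if_neg h1, if_pos h2]
    exact tsum_congr fun x => mul_comm _ _
  · rw [if_pos (iff_of_false h1 h2)]
    unfold hfun nu
    simp only [if_neg h1, if_neg h2]
    exact tsum_sq q

instance (n : ℕ) (p q : PMF ℕ) (e : Edge n) : IsProbabilityMeasure (edgeMeasure n p q e) := by
  unfold edgeMeasure; split <;> infer_instance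

lemma edgeMeasure_singleton (n : ℕ) (p q : PMF ℕ) (e : Edge n) (x : ℕ) :
    edgeMeasure n p q e {x} = nu n p q (truth n) e x := by
  unfold edgeMeasure nu
  split <;> rw [PMF.toMeasure_apply_singleton _ _ (measurableSet_singleton x)]

lemma sbm_singleton (n : ℕ) (p q : PMF ℕ) (w : Edge n → ℕ) :
    sbm n p q {w} = ∏ e : Edge n, nu n p q (truth n) e (w e) := by
  rw [← Set.univ_pi_singleton w]
  rw [sbm, Measure.pi_pi]
  exact Finset.prod_congr rfl fun e _ => edgeMeasure_singleton n p q e (w e)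

lemma measure_le_rho_pow (n : ℕ) (p q : PMF ℕ) (σ : Fin (2 * n) → Bool) :
    sbm n p q {w | likelihood n p q (truth n) w ≤ likelihood n p q σ w}
      ≤ rho p q ^ (Finset.univ.filter fun e : Edge n =>
          ¬((truth n e.1.1 = truth n e.1.2) ↔ (σ e.1.1 = σ e.1.2))).card := by
  classical
  set E := {w | likelihood n p q (truth n) w ≤ likelihood n p q σ w} with hE
  have hmeas : MeasurableSet E := E.to_countable.measurableSet
  rw [← lintegral_indicator_one hmeas, lintegral_countable']
  have hstep : ∀ w : Edge n → ℕ,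
      E.indicator 1 w * sbm n p q {w} ≤ ∏ e : Edge n, hfun n p q σ e (w e) := by
    intro w
    by_cases hw : w ∈ E
    · rw [Set.indicator_of_mem hw, Pi.one_apply, one_mul, sbm_singleton]
      have hle : likelihood n p q (truth n) w ≤ likelihood n p q σ w := hw
      rw [likelihood_eq, likelihood_eq] at hle
      calc ∏ e : Edge n, nu n p q (truth n) e (w e)
          = (∏ e : Edge n, nu n p q (truth n) e (w e)) ^ ((1:ℝ)/2) *
            (∏ e : Edge n, nu n p q (truth n) e (w e)) ^ ((1:ℝ)/2) := by
            rw [← ENNReal.rpow_add_of_nonneg _ _ (by norm_num) (by norm_num)]; norm_num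
        _ ≤ (∏ e : Edge n, nu n p q (truth n) e (w e)) ^ ((1:ℝ)/2) *
            (∏ e : Edge n, nu n p q σ e (w e)) ^ ((1:ℝ)/2) := by
            apply mul_le_mul_right
            exact ENNReal.rpow_le_rpow hle (by norm_num)
        _ = ∏ e : Edge n, hfun n p q σ e (w e) := by
            rw [← ENNReal.prod_rpow_of_ne_top (fun e _ => nu_ne_top n p q (truth n) e (w e)),
              ← ENNReal.prod_rpow_of_ne_top (fun e _ => nu_ne_top n p q σ e (w e)),
              ← Finset.prod_mul_distrib]
            rfl
    · rw [Set.indicator_of_notMem hw, zero_mul]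
      exact zero_le
  calc ∑' w : Edge n → ℕ, E.indicator 1 w * sbm n p q {w}
      ≤ ∑' w : Edge n → ℕ, ∏ e : Edge n, hfun n p q σ e (w e) := ENNReal.tsum_le_tsum hstep
    _ = ∏ e : Edge n, ∑' x : ℕ, hfun n p q σ e x := tsum_pi (fun e => hfun n p q σ e)
    _ = rho p q ^ (Finset.univ.filter fun e : Edge n =>
          ¬((truth n e.1.1 = truth n e.1.2) ↔ (σ e.1.1 = σ e.1.2))).card := by
        simp_rw [tsum_hfun]
        rw [Finset.prod_ite, Finset.prod_const, Finset.prod_const, one_pow, one_mul]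

-- the set of misclassified vertices
def mis (n : ℕ) (σ : Fin (2 * n) → Bool) : Finset (Fin (2 * n)) :=
  Finset.univ.filter fun i => ¬ (σ i = truth n i)

lemma bool_flip (a b c d : Bool) :
    (¬((a = b) ↔ (c = d))) ↔ ¬((¬(c = a)) ↔ ¬(d = b)) := by
  revert a b c d; decide

/-- number of edges with exactly one endpoint in `D` -/
lemma card_flip_edges (n : ℕ) (D : Finset (Fin (2 * n))) :
    (Finset.univ.filter fun e : Edge n => ¬((e.1.1 ∈ D) ↔ (e.1.2 ∈ D))).card
      = D.card * (2 * n - D.card) := by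
  classical
  have h := Finset.card_bij'
    (s := Finset.univ.filter fun e : Edge n => ¬((e.1.1 ∈ D) ↔ (e.1.2 ∈ D)))
    (t := D ×ˢ (Finset.univ \ D))
    (i := fun e _ => if e.1.1 ∈ D then (e.1.1, e.1.2) else (e.1.2, e.1.1))
    (j := fun p hp => if h : p.1 < p.2 then ⟨(p.1, p.2), h⟩ else
      ⟨(p.2, p.1), by
        have hm := Finset.mem_product.mp hp
        have h1 : p.1 ∈ D := hm.1
        have h2 : p.2 ∉ D := (Finset.mem_sdiff.mp hm.2).2
        have hne : p.2 ≠ p.1 := fun he => h2 (he ▸ h1)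
        exact lt_of_le_of_ne (le_of_not_gt h) hne⟩)
    ?_ ?_ ?_ ?_
  · rw [h, Finset.card_product, Finset.card_sdiff_of_subset (Finset.subset_univ D),
      Finset.card_univ, Fintype.card_fin]
  · intro e he
    rw [Finset.mem_filter] at he
    by_cases h1 : e.1.1 ∈ D
    · have h2 : e.1.2 ∉ D := fun h2 => he.2 (iff_of_true h1 h2)
      simp [if_pos h1, Finset.mem_product, h1, h2]
    · have h2 : e.1.2 ∈ D := by
        by_contra h2
        exact he.2 (iff_of_false h1 h2)
      simp [if_neg h1, Finset.mem_product, h1, h2]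
  · intro p hp
    have hm := Finset.mem_product.mp hp
    have h1 : p.1 ∈ D := hm.1
    have h2 : p.2 ∉ D := (Finset.mem_sdiff.mp hm.2).2
    rw [Finset.mem_filter]
    refine ⟨Finset.mem_univ _, ?_⟩
    by_cases hlt : p.1 < p.2
    · simp only [dif_pos hlt]
      exact fun hiff => h2 (hiff.mp h1)
    · simp only [dif_neg hlt]
      exact fun hiff => h2 (hiff.mpr h1)
  · intro e he
    rw [Finset.mem_filter] at he
    by_cases h1 : e.1.1 ∈ D
    · simp only [if_pos h1]
      have := e.2
      rw [dif_pos this]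
    · simp only [if_neg h1]
      have hlt := e.2
      have : ¬ (e.1.2 < e.1.1) := asymm hlt
      rw [dif_neg this]
  · intro p hp
    have hm := Finset.mem_product.mp hp
    have h1 : p.1 ∈ D := hm.1
    have h2 : p.2 ∉ D := (Finset.mem_sdiff.mp hm.2).2
    by_cases hlt : p.1 < p.2
    · simp only [dif_pos hlt]
      simp [if_pos h1]
    · simp only [dif_neg hlt]
      simp [if_neg h2]

def SS (n : ℕ) (σ : Fin (2 * n) → Bool) : Finset (Fin (2 * n)) :=
  Finset.univ.filter fun i => truth n i = true ∧ σ i = false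
def TT (n : ℕ) (σ : Fin (2 * n) → Bool) : Finset (Fin (2 * n)) :=
  Finset.univ.filter fun i => truth n i = false ∧ σ i = true
def AA (n : ℕ) : Finset (Fin (2 * n)) := Finset.univ.filter fun i => truth n i = true
def BB (n : ℕ) : Finset (Fin (2 * n)) := Finset.univ.filter fun i => truth n i = false

lemma card_AA (n : ℕ) : (AA n).card = n := by
  classical
  have : AA n = Finset.map (Fin.castLEEmb (by omega : n ≤ 2 * n)) Finset.univ := by
    ext j
    simp only [AA, Finset.mem_filter, Finset.mem_univ, true_and, Finset.mem_map,
      truth, decide_eq_true_eq, Fin.castLEEmb, Fin.castLE, Finset.mem_univ]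
    constructor
    · intro hj
      exact ⟨⟨j.val, hj⟩, by simp [Fin.ext_iff]⟩
    · rintro ⟨i, rfl⟩
      simpa using i.isLt
  rw [this, Finset.card_map, Finset.card_univ, Fintype.card_fin]

lemma card_BB (n : ℕ) : (BB n).card = n := by
  classical
  have h := Finset.card_filter_add_card_filter_not
    (s := (Finset.univ : Finset (Fin (2 * n)))) (p := fun i => truth n i = true)
  have hBB : (Finset.univ.filter fun i : Fin (2*n) => ¬ (truth n i = true)) = BB n := by
    ext i; simp [BB, Bool.not_eq_true]
  rw [hBB] at h
  have hAA : (Finset.univ.filter fun i : Fin (2*n) => truth n i = true) = AA n := rfl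
  rw [hAA, card_AA] at h
  rw [Finset.card_univ, Fintype.card_fin] at h
  omega

lemma mis_card (n : ℕ) (σ : Fin (2 * n) → Bool) :
    (mis n σ).card = (SS n σ).card + (TT n σ).card := by
  classical
  have hunion : mis n σ = SS n σ ∪ TT n σ := by
    ext i
    simp only [mis, SS, TT, Finset.mem_filter, Finset.mem_univ, true_and, Finset.mem_union]
    cases ht : truth n i <;> cases hs : σ i <;> simp
  have hdisj : Disjoint (SS n σ) (TT n σ) := by
    rw [Finset.disjoint_left]
    intro i hi hi'
    simp only [SS, TT, Finset.mem_filter] at hi hi'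
    rw [hi.2.1] at hi'
    exact absurd hi'.2.1 (by simp)
  rw [hunion, Finset.card_union_of_disjoint hdisj]

lemma TT_card (n : ℕ) (σ : Fin (2 * n) → Bool) (hbal : balanced n σ) :
    (TT n σ).card = (SS n σ).card := by
  classical
  set X := Finset.univ.filter fun i : Fin (2*n) => truth n i = true ∧ σ i = true with hX
  have h1 : X.card + (SS n σ).card = n := by
    have h := Finset.card_filter_add_card_filter_not
      (s := AA n) (p := fun i => σ i = true)
    have e1 : (AA n).filter (fun i => σ i = true) = X := by
      ext i; simp [AA, hX, Finset.mem_filter, and_comm]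
    have e2 : (AA n).filter (fun i => ¬ σ i = true) = SS n σ := by
      ext i; simp [AA, SS, Finset.mem_filter, Bool.not_eq_true, and_comm]
    rw [e1, e2, card_AA] at h
    exact h
  have h2 : X.card + (TT n σ).card = n := by
    have h := Finset.card_filter_add_card_filter_not
      (s := Finset.univ.filter fun i : Fin (2*n) => σ i = true)
      (p := fun i => truth n i = true)
    have e1 : (Finset.univ.filter fun i : Fin (2*n) => σ i = true).filter
        (fun i => truth n i = true) = X := by
      ext i; simp only [Finset.mem_filter, Finset.mem_univ, true_and, hX]; tauto
    have e2 : (Finset.univ.filter fun i : Fin (2*n) => σ i = true).filter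
        (fun i => ¬ truth n i = true) = TT n σ := by
      ext i
      simp only [Finset.mem_filter, Finset.mem_univ, true_and, TT, Bool.not_eq_true]
      tauto
    rw [e1, e2, hbal] at h
    exact h
  omega

lemma SS_subset (n : ℕ) (σ : Fin (2 * n) → Bool) : SS n σ ⊆ AA n := by
  intro i hi
  simp only [SS, Finset.mem_filter] at hi
  simp [AA, hi.2.1]

lemma TT_subset (n : ℕ) (σ : Fin (2 * n) → Bool) : TT n σ ⊆ BB n := by
  intro i hi
  simp only [TT, Finset.mem_filter] at hi
  simp [BB, hi.2.1]

lemma SS_card_le (n : ℕ) (σ : Fin (2 * n) → Bool) : (SS n σ).card ≤ n := by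
  have := Finset.card_le_card (SS_subset n σ)
  rwa [card_AA] at this

lemma sigma_eq_of (n : ℕ) (σ σ' : Fin (2 * n) → Bool)
    (h1 : SS n σ = SS n σ') (h2 : TT n σ = TT n σ') : σ = σ' := by
  funext i
  have hS := Finset.ext_iff.mp h1 i
  have hT := Finset.ext_iff.mp h2 i
  simp only [SS, TT, Finset.mem_filter, Finset.mem_univ, true_and] at hS hT
  cases ht : truth n i <;> rw [ht] at hS hT <;>
    cases hs : σ i <;> cases hs' : σ' i <;> rw [hs, hs'] at hS hT <;> simp_all

lemma k_pos (n : ℕ) (σ : Fin (2 * n) → Bool) (hbal : balanced n σ)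
    (hne : ¬ equivTruth n σ) : 1 ≤ (SS n σ).card := by
  by_contra h
  have h0 : (SS n σ).card = 0 := by omega
  have hT0 : (TT n σ).card = 0 := by rw [TT_card n σ hbal]; exact h0
  apply hne
  left
  funext i
  have hiS : i ∉ SS n σ := by
    intro hi
    rw [Finset.card_eq_zero.mp h0] at hi
    exact absurd hi (Finset.notMem_empty i)
  have hiT : i ∉ TT n σ := by
    intro hi
    rw [Finset.card_eq_zero.mp hT0] at hi
    exact absurd hi (Finset.notMem_empty i)
  simp only [SS, TT, Finset.mem_filter, Finset.mem_univ, true_and, not_and] at hiS hiT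
  cases ht : truth n i <;> rw [ht] at hiS hiT <;> cases hs : σ i <;> simp_all

lemma k_lt (n : ℕ) (σ : Fin (2 * n) → Bool) (hbal : balanced n σ)
    (hne : ¬ equivTruth n σ) : (SS n σ).card ≤ n - 1 := by
  have hle := SS_card_le n σ
  rcases Nat.lt_or_ge (SS n σ).card n with h | h
  · omega
  have hSn : (SS n σ).card = n := by omega
  exfalso
  apply hne
  right
  have hSA : SS n σ = AA n := by
    apply Finset.eq_of_subset_of_card_le (SS_subset n σ)
    rw [card_AA, hSn]
  have hTB : TT n σ = BB n := by
    apply Finset.eq_of_subset_of_card_le (TT_subset n σ)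
    rw [card_BB, TT_card n σ hbal, hSn]
  funext i
  have hiS := Finset.ext_iff.mp hSA i
  have hiT := Finset.ext_iff.mp hTB i
  simp only [SS, TT, AA, BB, Finset.mem_filter, Finset.mem_univ, true_and] at hiS hiT
  cases ht : truth n i <;> rw [ht] at hiS hiT <;> cases hs : σ i <;> simp_all

lemma fiber_card (n k : ℕ) (s : Finset (Fin (2 * n) → Bool))
    (hs : ∀ σ ∈ s, (SS n σ).card = k ∧ (TT n σ).card = k) :
    s.card ≤ n.choose k * n.choose k := by
  classical
  have hinj : ∀ σ ∈ s, ∀ σ' ∈ s,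
      (fun σ => (SS n σ, TT n σ)) σ = (fun σ => (SS n σ, TT n σ)) σ' → σ = σ' := by
    intro σ _ σ' _ h
    simp only [Prod.mk.injEq] at h
    exact sigma_eq_of n σ σ' h.1 h.2
  have hmaps : ∀ σ ∈ s, (SS n σ, TT n σ) ∈
      (Finset.powersetCard k (AA n)) ×ˢ (Finset.powersetCard k (BB n)) := by
    intro σ hσ
    rw [Finset.mem_product]
    constructor
    · rw [Finset.mem_powersetCard]
      exact ⟨SS_subset n σ, (hs σ hσ).1⟩
    · rw [Finset.mem_powersetCard]
      exact ⟨TT_subset n σ, (hs σ hσ).2⟩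
  have := Finset.card_le_card_of_injOn _ hmaps hinj
  rwa [Finset.card_product, Finset.card_powersetCard, Finset.card_powersetCard,
    card_AA, card_BB] at this

lemma reflect_sum (n : ℕ) (G : ℕ → ℝ≥0∞)
    (hsymm : ∀ j, n/2 < j → j ≤ n-1 → G j = G (n - j)) :
    ∑ j ∈ Finset.Icc 1 (n-1), G j ≤ ∑ k ∈ Finset.Icc 1 (n/2), 2 * G k := by
  classical
  rw [← Finset.sum_filter_add_sum_filter_not (Finset.Icc 1 (n-1)) (· ≤ n/2)]
  have hA : ∑ j ∈ (Finset.Icc 1 (n-1)).filter (· ≤ n/2), G j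
      ≤ ∑ k ∈ Finset.Icc 1 (n/2), G k := by
    apply Finset.sum_le_sum_of_subset
    intro j hj
    simp only [Finset.mem_filter, Finset.mem_Icc] at hj ⊢
    omega
  have hB : ∑ j ∈ (Finset.Icc 1 (n-1)).filter (fun j => ¬ j ≤ n/2), G j
      ≤ ∑ k ∈ Finset.Icc 1 (n/2), G k := by
    have h1 : ∑ j ∈ (Finset.Icc 1 (n-1)).filter (fun j => ¬ j ≤ n/2), G j
        = ∑ j ∈ (Finset.Icc 1 (n-1)).filter (fun j => ¬ j ≤ n/2), G (n - j) := by
      apply Finset.sum_congr rfl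
      intro j hj
      simp only [Finset.mem_filter, Finset.mem_Icc] at hj
      exact hsymm j (by omega) (by omega)
    have hinj : ∀ x ∈ (Finset.Icc 1 (n-1)).filter (fun j => ¬ j ≤ n/2),
        ∀ y ∈ (Finset.Icc 1 (n-1)).filter (fun j => ¬ j ≤ n/2), n - x = n - y → x = y := by
      intro x hx y hy hxy
      simp only [Finset.mem_filter, Finset.mem_Icc] at hx hy
      omega
    have h2 : ∑ j ∈ (Finset.Icc 1 (n-1)).filter (fun j => ¬ j ≤ n/2), G (n - j)
        = ∑ k ∈ ((Finset.Icc 1 (n-1)).filter (fun j => ¬ j ≤ n/2)).image (fun j => n - j), G k :=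
      (Finset.sum_image hinj).symm
    rw [h1, h2]
    apply Finset.sum_le_sum_of_subset
    intro k hk
    simp only [Finset.mem_image, Finset.mem_filter, Finset.mem_Icc] at hk
    obtain ⟨j, hj, rfl⟩ := hk
    simp only [Finset.mem_Icc]
    omega
  calc _ ≤ (∑ k ∈ Finset.Icc 1 (n/2), G k) + ∑ k ∈ Finset.Icc 1 (n/2), G k :=
        add_le_add hA hB
    _ = _ := by
        rw [← Finset.sum_add_distrib]
        exact Finset.sum_congr rfl fun k _ => (two_mul (G k)).symm


lemma rho_ne_top (p q : PMF ℕ) : rho p q ≠ ∞ := by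
  have hle : rho p q ≤ 2 := by
    have hterm : ∀ x : ℕ, (p x) ^ ((1:ℝ)/2) * (q x) ^ ((1:ℝ)/2) ≤ p x + q x := by
      intro x
      rcases le_total (p x) (q x) with h | h
      · calc (p x) ^ ((1:ℝ)/2) * (q x) ^ ((1:ℝ)/2)
            ≤ (q x) ^ ((1:ℝ)/2) * (q x) ^ ((1:ℝ)/2) :=
              mul_le_mul_left (ENNReal.rpow_le_rpow h (by norm_num)) _
          _ = q x := by
              rw [← ENNReal.rpow_add_of_nonneg _ _ (by norm_num) (by norm_num)]; norm_num
          _ ≤ p x + q x := le_add_self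
      · calc (p x) ^ ((1:ℝ)/2) * (q x) ^ ((1:ℝ)/2)
            ≤ (p x) ^ ((1:ℝ)/2) * (p x) ^ ((1:ℝ)/2) :=
              mul_le_mul_right (ENNReal.rpow_le_rpow h (by norm_num)) _
          _ = p x := by
              rw [← ENNReal.rpow_add_of_nonneg _ _ (by norm_num) (by norm_num)]; norm_num
          _ ≤ p x + q x := le_self_add
    calc rho p q ≤ ∑' x : ℕ, (p x + q x) := ENNReal.tsum_le_tsum hterm
      _ = 1 + 1 := by rw [ENNReal.tsum_add, p.tsum_coe, q.tsum_coe]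
      _ = 2 := by norm_num
  exact (lt_of_le_of_lt hle (by norm_num)).ne

lemma rho_toReal (p q : PMF ℕ) :
    (rho p q).toReal = ∑' ℓ : ℕ, Real.sqrt ((p ℓ).toReal * (q ℓ).toReal) := by
  rw [rho, ENNReal.tsum_toReal_eq]
  · apply tsum_congr
    intro x
    rw [ENNReal.toReal_mul, ← ENNReal.toReal_rpow, ← ENNReal.toReal_rpow,
      Real.sqrt_eq_rpow, Real.mul_rpow ENNReal.toReal_nonneg ENNReal.toReal_nonneg]
  · intro x
    exact ENNReal.mul_ne_top
      (ENNReal.rpow_ne_top_of_nonneg (by norm_num) (PMF.apply_ne_top p x))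
      (ENNReal.rpow_ne_top_of_nonneg (by norm_num) (PMF.apply_ne_top q x))

lemma term_bound (n k : ℕ) (p q : PMF ℕ) (hk : 1 ≤ k) (h2k : 2*k ≤ n) :
    2 * ((n.choose k : ℝ≥0∞) * (n.choose k)) * rho p q ^ (4*k*(n-k)) ≤
      ENNReal.ofReal (Real.exp (2*(k:ℝ)*(Real.log ((n:ℝ)/(k:ℝ)) + 1)
        - 2*(k:ℝ)*((n:ℝ)-(k:ℝ)) * renyi p q)) := by
  have hrtop := rho_ne_top p q
  set r := (rho p q).toReal with hr
  have hr0 : (0:ℝ) ≤ r := ENNReal.toReal_nonneg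
  have hrho : rho p q = ENNReal.ofReal r := (ENNReal.ofReal_toReal hrtop).symm
  have hren : renyi p q = -2 * Real.log r := by rw [renyi, hr, rho_toReal]
  rw [hrho, hren]
  have hLHS : 2 * ((n.choose k : ℝ≥0∞) * (n.choose k)) * (ENNReal.ofReal r) ^ (4*k*(n-k))
      = ENNReal.ofReal (2 * (n.choose k : ℝ)^2 * r ^ (4*k*(n-k))) := by
    rw [← ENNReal.ofReal_pow hr0]
    rw [show (2 * (n.choose k : ℝ)^2 * r ^ (4*k*(n-k)))
        = (2 * ((n.choose k : ℝ) * (n.choose k))) * r ^ (4*k*(n-k)) by ring]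
    rw [ENNReal.ofReal_mul (by positivity), ENNReal.ofReal_mul (by norm_num),
      ENNReal.ofReal_mul (by positivity), ENNReal.ofReal_natCast]
    norm_num
  rw [hLHS]
  exact ENNReal.ofReal_le_ofReal (real_key n k hk h2k r hr0)


theorem statement0 (n : ℕ) (p q : PMF ℕ) :
    (sbm n p q (failEvent n p q)).toReal ≤
      ∑ k ∈ Finset.Icc 1 (n / 2),
        Real.exp (2 * (k : ℝ) * (Real.log ((n : ℝ) / (k : ℝ)) + 1)
          - 2 * (k : ℝ) * ((n : ℝ) - (k : ℝ)) * renyi p q) := by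
  classical
  set bad : Finset (Fin (2 * n) → Bool) :=
    Finset.univ.filter (fun σ => balanced n σ ∧ ¬ equivTruth n σ) with hbad
  set kee : (Fin (2 * n) → Bool) → ℕ := fun σ => (SS n σ).card with hkee
  set G : ℕ → ℝ≥0∞ :=
    fun j => ((n.choose j : ℝ≥0∞) * (n.choose j)) * rho p q ^ (4*j*(n-j)) with hG
  -- union bound
  have hsub : failEvent n p q ⊆
      ⋃ σ ∈ bad, {w | likelihood n p q (truth n) w ≤ likelihood n p q σ w} := by
    intro w hw
    obtain ⟨σ, h1, h2, h3⟩ := hw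
    exact Set.mem_biUnion (by rw [hbad]; exact Finset.mem_filter.mpr ⟨Finset.mem_univ _, h1, h2⟩) h3
  have step1 : sbm n p q (failEvent n p q) ≤
      ∑ σ ∈ bad, sbm n p q {w | likelihood n p q (truth n) w ≤ likelihood n p q σ w} :=
    (measure_mono hsub).trans (measure_biUnion_finset_le _ _)
  -- per-σ bound
  have step2 : ∀ σ ∈ bad,
      sbm n p q {w | likelihood n p q (truth n) w ≤ likelihood n p q σ w}
        ≤ rho p q ^ (4 * kee σ * (n - kee σ)) := by
    intro σ hσ
    have hbal : balanced n σ := by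
      rw [hbad] at hσ
      exact (Finset.mem_filter.mp hσ).2.1
    refine (measure_le_rho_pow n p q σ).trans_eq ?_
    congr 1
    have hcond : (Finset.univ.filter fun e : Edge n =>
        ¬((truth n e.1.1 = truth n e.1.2) ↔ (σ e.1.1 = σ e.1.2))).card
        = (Finset.univ.filter fun e : Edge n =>
        ¬((e.1.1 ∈ mis n σ) ↔ (e.1.2 ∈ mis n σ))).card := by
      congr 1
      apply Finset.filter_congr
      intro e _
      have hm : ∀ i, i ∈ mis n σ ↔ ¬ (σ i = truth n i) := by
        intro i; simp [mis]
      rw [hm, hm]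
      exact bool_flip (truth n e.1.1) (truth n e.1.2) (σ e.1.1) (σ e.1.2)
    rw [hcond, card_flip_edges]
    have hmc : (mis n σ).card = kee σ + kee σ := by
      rw [mis_card, TT_card n σ hbal]
    have hle : kee σ ≤ n := SS_card_le n σ
    rw [hmc]
    have h2 : 2 * n - (kee σ + kee σ) = 2 * (n - kee σ) := by omega
    rw [h2]
    ring
  have step3 : sbm n p q (failEvent n p q) ≤ ∑ σ ∈ bad, rho p q ^ (4 * kee σ * (n - kee σ)) :=
    step1.trans (Finset.sum_le_sum step2)
  -- group by k
  have step4 : ∑ σ ∈ bad, rho p q ^ (4 * kee σ * (n - kee σ))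
      = ∑ j ∈ bad.image kee, (bad.filter fun σ => kee σ = j).card •
          rho p q ^ (4 * j * (n - j)) := by
    exact Finset.sum_comp (fun j => rho p q ^ (4 * j * (n - j))) kee
  have step5 : ∑ j ∈ bad.image kee, (bad.filter fun σ => kee σ = j).card •
        rho p q ^ (4 * j * (n - j)) ≤ ∑ j ∈ bad.image kee, G j := by
    apply Finset.sum_le_sum
    intro j hj
    rw [nsmul_eq_mul, hG]
    apply mul_le_mul_left
    have hcard : (bad.filter fun σ => kee σ = j).card ≤ n.choose j * n.choose j := by
      apply fiber_card
      intro σ hσ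
      rw [Finset.mem_filter, hbad, Finset.mem_filter] at hσ
      obtain ⟨⟨_, hbal, _⟩, hkj⟩ := hσ
      exact ⟨hkj, by rw [TT_card n σ hbal]; exact hkj⟩
    calc ((bad.filter fun σ => kee σ = j).card : ℝ≥0∞)
        ≤ ((n.choose j * n.choose j : ℕ) : ℝ≥0∞) := by exact_mod_cast Nat.cast_le.mpr hcard
      _ = _ := by push_cast; ring
  have step6 : ∑ j ∈ bad.image kee, G j ≤ ∑ j ∈ Finset.Icc 1 (n-1), G j := by
    apply Finset.sum_le_sum_of_subset
    intro j hj
    rw [Finset.mem_image] at hj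
    obtain ⟨σ, hσ, rfl⟩ := hj
    rw [hbad, Finset.mem_filter] at hσ
    obtain ⟨_, hbal, hne⟩ := hσ
    rw [Finset.mem_Icc]
    exact ⟨k_pos n σ hbal hne, k_lt n σ hbal hne⟩
  have step7 : ∑ j ∈ Finset.Icc 1 (n-1), G j ≤ ∑ k ∈ Finset.Icc 1 (n/2), 2 * G k := by
    apply reflect_sum
    intro j hj1 hj2
    simp only [hG]
    have hjn : j ≤ n := by omega
    have e1 : n.choose (n - j) = n.choose j := Nat.choose_symm hjn
    have e2 : n - (n - j) = j := by omega
    rw [e1, e2]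
    have e3 : 4 * (n - j) * j = 4 * j * (n - j) := by ring
    rw [e3]
  have step8 : ∑ k ∈ Finset.Icc 1 (n/2), 2 * G k ≤
      ∑ k ∈ Finset.Icc 1 (n/2), ENNReal.ofReal
        (Real.exp (2 * (k : ℝ) * (Real.log ((n : ℝ) / (k : ℝ)) + 1)
          - 2 * (k : ℝ) * ((n : ℝ) - (k : ℝ)) * renyi p q)) := by
    apply Finset.sum_le_sum
    intro k hk
    rw [Finset.mem_Icc] at hk
    rw [hG, ← mul_assoc]
    have := term_bound n k p q hk.1 (by omega)
    rw [← mul_assoc] at this ⊢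
    exact this
  have total : sbm n p q (failEvent n p q) ≤
      ENNReal.ofReal (∑ k ∈ Finset.Icc 1 (n/2),
        Real.exp (2 * (k : ℝ) * (Real.log ((n : ℝ) / (k : ℝ)) + 1)
          - 2 * (k : ℝ) * ((n : ℝ) - (k : ℝ)) * renyi p q)) := by
    rw [ENNReal.ofReal_sum_of_nonneg (fun k _ => (Real.exp_pos _).le)]
    exact step3.trans (le_of_eq step4 |>.trans (step5.trans (step6.trans (step7.trans step8))))
  exact ENNReal.toReal_le_of_le_ofReal
    (Finset.sum_nonneg fun k _ => (Real.exp_pos _).le) total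


end SBM0
end

section
/- Consider the discrete weighted stochastic block model with K ≥ 2 communities of size n and color alphabet {0, 1, ..., L}: for fixed vectors a = (a_1, ..., a_L) and b = (b_1, ..., b_L) in ℝ_+^L with u = Σ_ℓ a_ℓ and v = Σ_ℓ b_ℓ, within-community edge weights have distribution p_n with p_n(0) = 1 − u log n / n and p_n(ℓ) = a_ℓ log n / n for 1 ≤ ℓ ≤ L, and between-community edge weights have distribution q_n with q_n(0) = 1 − v log n / n and q_n(ℓ) = b_ℓ log n / n. If Σ_{ℓ=1}^L (√a_ℓ − √b_ℓ)² > 1, then the maximum likelihood estimator recovers the communities exactly with probability converging to 1 as n → ∞. -/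
/-!
STATEMENT 5: In the discrete weighted stochastic block model with `K ≥ 2` communities of
size `n` and color alphabet `{0, 1, …, L}`, where within-community edges have color `ℓ ≥ 1`
with probability `aℓ log n / n` (color 0 with the remaining probability) and
between-community edges have color `ℓ ≥ 1` with probability `bℓ log n / n`, if
`∑_{ℓ=1}^L (√aℓ − √bℓ)² > 1` then maximum likelihood recovers the communities exactly
with probability converging to 1 as `n → ∞`.
-/

open MeasureTheory Filter
open scoped ENNReal

namespace SBM5

/-- Mass function of the edge-color distribution with parameter vector `c`:
color `0` has mass `1 − (∑ c) log n / n`, color `ℓ+1` has mass `c ℓ log n / n`. -/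
noncomputable def colMass (L : ℕ) (c : Fin L → ℝ) (n : ℕ) : Fin (L + 1) → ℝ≥0∞ :=
  Fin.cases (ENNReal.ofReal (1 - (∑ j, c j) * Real.log n / n))
    (fun j => ENNReal.ofReal (c j * Real.log n / n))

/-- The corresponding distribution on the color alphabet `{0, 1, …, L}`. -/
noncomputable def colDist (L : ℕ) (c : Fin L → ℝ) (n : ℕ) : Measure (Fin (L + 1)) :=
  ∑ ℓ : Fin (L + 1), colMass L c n ℓ • Measure.dirac ℓ

/-- Edges of the complete graph on the `n * K` vertices. -/
abbrev Edge (n K : ℕ) := {e : Fin (n * K) × Fin (n * K) // e.1 < e.2}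

/-- The ground-truth community assignment. -/
def truth (n K : ℕ) (i : Fin (n * K)) : Fin K :=
  ⟨i.val / n, Nat.div_lt_of_lt_mul i.isLt⟩

/-- Distribution of the color of one edge: parameters `a` within a community,
parameters `b` between communities. -/
noncomputable def edgeMeasure (n K L : ℕ) (a b : Fin L → ℝ) (e : Edge n K) :
    Measure (Fin (L + 1)) :=
  if truth n K e.1.1 = truth n K e.1.2 then colDist L a n else colDist L b n

/-- The law of the colored random graph: all edge colors independent. -/
noncomputable def sbm (n K L : ℕ) (a b : Fin L → ℝ) : Measure (Edge n K → Fin (L + 1)) :=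
  Measure.pi (edgeMeasure n K L a b)

/-- Likelihood of the observed colors `w` under the assignment `σ`. -/
noncomputable def likelihood (n K L : ℕ) (a b : Fin L → ℝ) (σ : Fin (n * K) → Fin K)
    (w : Edge n K → Fin (L + 1)) : ℝ≥0∞ :=
  ∏ e : Edge n K, if σ e.1.1 = σ e.1.2 then colMass L a n (w e) else colMass L b n (w e)

/-- An assignment is balanced if each of the `K` communities has exactly `n` nodes. -/
def balanced (n K : ℕ) (σ : Fin (n * K) → Fin K) : Prop :=
  ∀ c : Fin K, (Finset.univ.filter fun i => σ i = c).card = n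

/-- `σ` coincides with the truth up to a permutation of the `K` community labels. -/
def equivTruth (n K : ℕ) (σ : Fin (n * K) → Fin K) : Prop :=
  ∃ π : Equiv.Perm (Fin K), σ = π ∘ truth n K

/-- Success event of maximum likelihood: the truth is strictly more likely than every
balanced assignment that is not a label permutation of the truth. -/
def successEvent (n K L : ℕ) (a b : Fin L → ℝ) : Set (Edge n K → Fin (L + 1)) :=
  {w | ∀ σ, balanced n K σ → ¬ equivTruth n K σ →
    likelihood n K L a b σ w < likelihood n K L a b (truth n K) w}

/-! ### Auxiliary definitions -/

/-- number of discrepant edges between `σ` and the truth -/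
def ed (n K : ℕ) (σ : Fin (n * K) → Fin K) : ℕ :=
  (Finset.univ.filter fun e : Edge n K =>
    ¬((truth n K e.1.1 = truth n K e.1.2) ↔ (σ e.1.1 = σ e.1.2))).card

/-- Hamming distance to a permuted truth -/
def hamP (n K : ℕ) (σ : Fin (n * K) → Fin K) (π : Equiv.Perm (Fin K)) : ℕ :=
  (Finset.univ.filter fun i => σ i ≠ π (truth n K i)).card

/-- minimal Hamming distance to a permuted truth -/
noncomputable def mm (n K : ℕ) (σ : Fin (n * K) → Fin K) : ℕ :=
  haveI : Nonempty (Equiv.Perm (Fin K)) := ⟨1⟩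
  Finset.univ.inf' Finset.univ_nonempty (hamP n K σ)

/-- fiber cardinality -/
def fib (n K : ℕ) {α : Type*} [DecidableEq α] (f : Fin (n * K) → α) (v : α) : ℕ :=
  (Finset.univ.filter fun i => f i = v).card

noncomputable def badSet (n K : ℕ) : Finset (Fin (n * K) → Fin K) :=
  @Finset.filter _ (fun σ => balanced n K σ ∧ ¬ equivTruth n K σ) (Classical.decPred _)
    Finset.univ

lemma mem_badSet {n K : ℕ} {σ : Fin (n * K) → Fin K} :
    σ ∈ badSet n K ↔ balanced n K σ ∧ ¬ equivTruth n K σ := by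
  simp [badSet, Finset.mem_filter]

/-- real-valued mass function -/
noncomputable def F (L : ℕ) (c : Fin L → ℝ) (n : ℕ) : Fin (L + 1) → ℝ :=
  Fin.cases (1 - (∑ j, c j) * Real.log n / n) (fun j => c j * Real.log n / n)

/-- real-valued likelihood -/
noncomputable def G (n K L : ℕ) (a b : Fin L → ℝ) (σ : Fin (n * K) → Fin K)
    (w : Edge n K → Fin (L + 1)) : ℝ :=
  ∏ e : Edge n K, if σ e.1.1 = σ e.1.2 then F L a n (w e) else F L b n (w e)

/-! ### Combinatorial lemmas -/



lemma truth_fiber (n K : ℕ) (c : Fin K) : fib n K (truth n K) c = n := by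
  rcases Nat.eq_zero_or_pos n with hn | hn
  · subst hn
    have : (Finset.univ.filter fun i => truth 0 K i = c) = ∅ :=
      Finset.eq_empty_of_forall_notMem fun i _ => absurd i.isLt (by omega)
    simp [fib, this]
  · unfold fib
    have key : (Finset.univ.filter fun i => truth n K i = c).card
        = (Finset.univ : Finset (Fin n)).card := by
      apply Finset.card_nbij' (i := fun i => (⟨(i : Fin (n*K)).1 % n, Nat.mod_lt _ hn⟩ : Fin n))
        (j := fun j => (⟨c.1 * n + j.1, by
          calc c.1 * n + j.1 < c.1 * n + n := by omega
          _ = (c.1 + 1) * n := by ring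
          _ ≤ K * n := Nat.mul_le_mul_right _ (by omega)
          _ = n * K := Nat.mul_comm _ _⟩ : Fin (n * K)))
      · intro i _; exact Finset.mem_univ _
      · intro j _
        refine Finset.mem_filter.mpr ⟨Finset.mem_univ _, ?_⟩
        apply Fin.ext
        show (c.1 * n + j.1) / n = c.1
        rw [Nat.mul_comm, Nat.mul_add_div hn, Nat.div_eq_of_lt j.2, Nat.add_zero]
      · intro i hi
        have hi' : truth n K i = c := (Finset.mem_filter.mp hi).2
        have hdiv : (i : ℕ) / n = c.1 := congrArg Fin.val hi'
        apply Fin.ext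
        show c.1 * n + (i : ℕ) % n = (i : ℕ)
        rw [← hdiv, Nat.mul_comm]
        exact Nat.div_add_mod _ _
      · intro j _
        apply Fin.ext
        show (c.1 * n + j.1) % n = j.1
        rw [Nat.mul_comm, Nat.mul_add_mod, Nat.mod_eq_of_lt j.2]
    rw [key, Finset.card_univ, Fintype.card_fin]

lemma two_mul_same_card (n K : ℕ) {α : Type*} [DecidableEq α] [Fintype α]
    (f : Fin (n * K) → α) :
    2 * ((Finset.univ.filter fun e : Edge n K => f e.1.1 = f e.1.2).card) + n * K
      = ∑ v : α, (fib n K f v) ^ 2 := by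
  classical
  set S := (Finset.univ ×ˢ Finset.univ : Finset (Fin (n*K) × Fin (n*K))).filter
    (fun p => f p.1 = f p.2) with hS
  have hsq : S.card = ∑ v : α, (fib n K f v) ^ 2 := by
    rw [Finset.card_eq_sum_card_fiberwise (f := fun p => f p.1) (t := Finset.univ)
      (fun x _ => Finset.mem_univ _)]
    refine Finset.sum_congr rfl fun v _ => ?_
    have hfil : S.filter (fun p => f p.1 = v)
        = (Finset.univ.filter fun i => f i = v) ×ˢ (Finset.univ.filter fun i => f i = v) := by
      ext p
      constructor
      · intro hp
        obtain ⟨hpS, h2⟩ := Finset.mem_filter.mp hp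
        obtain ⟨-, h1⟩ := Finset.mem_filter.mp hpS
        exact Finset.mem_product.mpr ⟨Finset.mem_filter.mpr ⟨Finset.mem_univ _, h2⟩,
          Finset.mem_filter.mpr ⟨Finset.mem_univ _, h1.symm.trans h2⟩⟩
      · intro hp
        obtain ⟨h1, h2⟩ := Finset.mem_product.mp hp
        have h1' := (Finset.mem_filter.mp h1).2
        have h2' := (Finset.mem_filter.mp h2).2
        exact Finset.mem_filter.mpr ⟨Finset.mem_filter.mpr
          ⟨Finset.mem_product.mpr ⟨Finset.mem_univ _, Finset.mem_univ _⟩,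
            h1'.trans h2'.symm⟩, h1'⟩
    rw [hfil, Finset.card_product, fib, sq]
  have hdiag : (S.filter fun p => p.1 = p.2).card = n * K := by
    have hfil : (S.filter fun p => p.1 = p.2) = Finset.univ.diag := by
      ext p
      constructor
      · intro hp
        exact Finset.mem_diag.mpr ⟨Finset.mem_univ _, (Finset.mem_filter.mp hp).2⟩
      · intro hp
        have h := (Finset.mem_diag.mp hp).2
        exact Finset.mem_filter.mpr ⟨Finset.mem_filter.mpr
          ⟨Finset.mem_product.mpr ⟨Finset.mem_univ _, Finset.mem_univ _⟩, by rw [h]⟩, h⟩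
    rw [hfil, Finset.diag_card]
    simp
  have hoff : (S.filter fun p => ¬ p.1 = p.2).card
      = 2 * ((Finset.univ.filter fun e : Edge n K => f e.1.1 = f e.1.2).card) := by
    set A := S.filter (fun p => p.1 < p.2) with hA
    set B := S.filter (fun p => p.2 < p.1) with hB
    have hunion : S.filter (fun p => ¬ p.1 = p.2) = A ∪ B := by
      ext p
      constructor
      · intro hp
        obtain ⟨h1, h2⟩ := Finset.mem_filter.mp hp
        rcases lt_or_gt_of_ne (fun h => h2 h) with h | h
        · exact Finset.mem_union_left _ (Finset.mem_filter.mpr ⟨h1, h⟩)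
        · exact Finset.mem_union_right _ (Finset.mem_filter.mpr ⟨h1, h⟩)
      · intro hp
        rcases Finset.mem_union.mp hp with h | h
        · obtain ⟨h1, h⟩ := Finset.mem_filter.mp h
          exact Finset.mem_filter.mpr ⟨h1, ne_of_lt h⟩
        · obtain ⟨h1, h⟩ := Finset.mem_filter.mp h
          exact Finset.mem_filter.mpr ⟨h1, (ne_of_lt h).symm⟩
    have hdisj : Disjoint A B := by
      rw [Finset.disjoint_left]
      rintro p hp hq
      have h1 := (Finset.mem_filter.mp hp).2
      have h2 := (Finset.mem_filter.mp hq).2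
      exact absurd (h1.trans h2) (lt_irrefl _)
    have hmemS : ∀ p : Fin (n*K) × Fin (n*K), f p.1 = f p.2 → p ∈ S := fun p h =>
      Finset.mem_filter.mpr ⟨Finset.mem_product.mpr ⟨Finset.mem_univ _, Finset.mem_univ _⟩, h⟩
    have hAB : B.card = A.card := by
      apply Finset.card_bij (fun p _ => p.swap)
      · rintro p hp
        obtain ⟨h1, h2⟩ := Finset.mem_filter.mp hp
        exact Finset.mem_filter.mpr ⟨hmemS _ ((Finset.mem_filter.mp h1).2).symm, h2⟩
      · rintro p _ q _ h
        exact Prod.swap_injective h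
      · rintro p hp
        obtain ⟨h1, h2⟩ := Finset.mem_filter.mp hp
        exact ⟨p.swap, Finset.mem_filter.mpr
          ⟨hmemS _ ((Finset.mem_filter.mp h1).2).symm, h2⟩, by simp⟩
    have hAE : A.card = (Finset.univ.filter fun e : Edge n K => f e.1.1 = f e.1.2).card := by
      apply Finset.card_bij (fun p hp => (⟨p, (Finset.mem_filter.mp hp).2⟩ : Edge n K))
      · rintro p hp
        refine Finset.mem_filter.mpr ⟨Finset.mem_univ _, ?_⟩
        exact (Finset.mem_filter.mp ((Finset.mem_filter.mp hp).1)).2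
      · rintro p hp q hq h
        exact congrArg Subtype.val h
      · rintro e he
        exact ⟨e.1, Finset.mem_filter.mpr ⟨hmemS _ (Finset.mem_filter.mp he).2, e.2⟩, rfl⟩
    rw [hunion, Finset.card_union_of_disjoint hdisj, hAB, hAE]
    ring
  have := Finset.card_filter_add_card_filter_not (s := S) (p := fun p => p.1 = p.2)
  omega


lemma ed_xor_identity (n K : ℕ) (σ : Fin (n * K) → Fin K) :
    ed n K σ
      + 2 * ((Finset.univ.filter fun e : Edge n K =>
          (truth n K e.1.1 = truth n K e.1.2) ∧ (σ e.1.1 = σ e.1.2)).card)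
      = (Finset.univ.filter fun e : Edge n K =>
          truth n K e.1.1 = truth n K e.1.2).card
        + (Finset.univ.filter fun e : Edge n K => σ e.1.1 = σ e.1.2).card := by
  unfold ed
  rw [Finset.card_filter, Finset.card_filter, Finset.card_filter, Finset.card_filter,
    Finset.mul_sum, ← Finset.sum_add_distrib, ← Finset.sum_add_distrib]
  refine Finset.sum_congr rfl fun e _ => ?_
  by_cases h1 : truth n K e.1.1 = truth n K e.1.2 <;>
    by_cases h2 : σ e.1.1 = σ e.1.2 <;> simp [h1, h2]

lemma ed_identity (n K : ℕ) {g : Fin (n * K) → Fin K} (hg : balanced n K g) :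
    ed n K g + ∑ v : Fin K × Fin K, (fib n K (fun i => (truth n K i, g i)) v) ^ 2
      = K * n ^ 2 := by
  have h1 := two_mul_same_card n K (truth n K)
  have h2 := two_mul_same_card n K g
  have h3 := two_mul_same_card n K (fun i => (truth n K i, g i))
  have h4 := ed_xor_identity n K g
  have e1 : ∑ v : Fin K, (fib n K (truth n K) v) ^ 2 = K * n ^ 2 := by
    simp [truth_fiber, Finset.sum_const, Finset.card_univ]
  have e2 : ∑ v : Fin K, (fib n K g v) ^ 2 = K * n ^ 2 := by
    have : ∀ v : Fin K, fib n K g v = n := fun v => hg v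
    simp [this, Finset.sum_const, Finset.card_univ]
  have e3 : (Finset.univ.filter fun e : Edge n K =>
        (fun i => (truth n K i, g i)) e.1.1 = (fun i => (truth n K i, g i)) e.1.2).card
      = (Finset.univ.filter fun e : Edge n K =>
        (truth n K e.1.1 = truth n K e.1.2) ∧ (g e.1.1 = g e.1.2)).card := by
    apply Finset.card_bij (fun e _ => e)
    · intro e he
      obtain ⟨-, hp⟩ := Finset.mem_filter.mp he
      exact Finset.mem_filter.mpr ⟨Finset.mem_univ _, Prod.mk.injEq .. ▸ Prod.ext_iff.mp hp⟩
    · exact fun _ _ _ _ h => h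
    · intro e he
      obtain ⟨-, hp⟩ := Finset.mem_filter.mp he
      exact ⟨e, Finset.mem_filter.mpr ⟨Finset.mem_univ _, Prod.ext hp.1 hp.2⟩, rfl⟩
  rw [e1] at h1
  rw [e2] at h2
  rw [e3] at h3
  omega

lemma row_sum (n K : ℕ) (g : Fin (n * K) → Fin K) (c : Fin K) :
    ∑ c' : Fin K, fib n K (fun i => (truth n K i, g i)) (c, c') = n := by
  have h := truth_fiber n K c
  unfold fib at h ⊢
  calc ∑ c' : Fin K,
        (Finset.univ.filter fun i => (fun i => (truth n K i, g i)) i = (c, c')).card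
      = (Finset.univ.filter fun i => truth n K i = c).card := by
        rw [Finset.card_eq_sum_card_fiberwise (f := fun i => g i) (t := Finset.univ)
          (fun x _ => Finset.mem_univ _)]
        refine Finset.sum_congr rfl fun c' _ => ?_
        congr 1
        ext i
        simp only [Finset.mem_filter, Finset.mem_univ, true_and, Prod.mk.injEq]
        try tauto
    _ = n := h

lemma col_sum (n K : ℕ) {g : Fin (n * K) → Fin K} (hg : balanced n K g) (c' : Fin K) :
    ∑ c : Fin K, fib n K (fun i => (truth n K i, g i)) (c, c') = n := by
  have h := hg c'
  unfold fib
  calc ∑ c : Fin K,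
        (Finset.univ.filter fun i => (fun i => (truth n K i, g i)) i = (c, c')).card
      = (Finset.univ.filter fun i => g i = c').card := by
        rw [Finset.card_eq_sum_card_fiberwise (f := fun i => truth n K i) (t := Finset.univ)
          (fun x _ => Finset.mem_univ _)]
        refine Finset.sum_congr rfl fun c _ => ?_
        congr 1
        ext i
        simp only [Finset.mem_filter, Finset.mem_univ, true_and, Prod.mk.injEq]
        try tauto
    _ = n := h

lemma diag_sum (n K : ℕ) (g : Fin (n * K) → Fin K) :
    ∑ c : Fin K, fib n K (fun i => (truth n K i, g i)) (c, c)
      + (Finset.univ.filter fun i => g i ≠ truth n K i).card = n * K := by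
  have hsplit := Finset.card_filter_add_card_filter_not
    (s := (Finset.univ : Finset (Fin (n*K)))) (p := fun i => g i = truth n K i)
  have hagree : (Finset.univ.filter fun i => g i = truth n K i).card
      = ∑ c : Fin K, fib n K (fun i => (truth n K i, g i)) (c, c) := by
    rw [Finset.card_eq_sum_card_fiberwise (f := fun i => truth n K i) (t := Finset.univ)
      (fun x _ => Finset.mem_univ _)]
    refine Finset.sum_congr rfl fun c _ => ?_
    unfold fib
    congr 1
    ext i
    simp only [Finset.mem_filter, Finset.mem_univ, true_and, Prod.mk.injEq]
    constructor
    · rintro ⟨h1, h2⟩; exact ⟨h2, h1.trans h2⟩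
    · rintro ⟨h1, h2⟩; exact ⟨h2.trans h1.symm, h1⟩
  have hcard : (Finset.univ : Finset (Fin (n*K))).card = n * K := by simp
  have hne : (Finset.univ.filter fun i => g i ≠ truth n K i)
      = (Finset.univ.filter fun i => ¬ g i = truth n K i) := rfl
  rw [hne]
  omega


lemma edge_lower_A (n K : ℕ) {g : Fin (n * K) → Fin K} (hg : balanced n K g) :
    2 * ((Finset.univ.filter fun i => g i ≠ truth n K i).card : ℝ)
        * (n - ((Finset.univ.filter fun i => g i ≠ truth n K i).card : ℝ))
      ≤ ed n K g := by
  set M : Fin K × Fin K → ℝ := fun v => (fib n K (fun i => (truth n K i, g i)) v : ℝ) with hM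
  set h : ℝ := ((Finset.univ.filter fun i => g i ≠ truth n K i).card : ℝ) with hh
  have hM0 : ∀ v, 0 ≤ M v := fun v => Nat.cast_nonneg _
  have hrow : ∀ c, ∑ c', M (c, c') = (n : ℝ) := fun c => by
    rw [hM, ← Nat.cast_sum]; exact_mod_cast row_sum n K g c
  have hidR : (ed n K g : ℝ) + ∑ v, (M v) ^ 2 = K * n ^ 2 := by
    have := ed_identity n K hg
    have := congrArg (fun x : ℕ => (x : ℝ)) this
    push_cast at this
    simpa [hM] using this
  have hdiagR : ∑ c, M (c, c) + h = n * K := by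
    have := diag_sum n K g
    have := congrArg (fun x : ℕ => (x : ℝ)) this
    push_cast at this
    simpa [hM, hh] using this
  set r : Fin K → ℝ := fun c => ∑ c' ∈ Finset.univ.erase c, M (c, c') with hr
  have hrc : ∀ c, M (c, c) + r c = n := fun c => by
    show M (c, c) + ∑ c' ∈ Finset.univ.erase c, M (c, c') = (n : ℝ)
    rw [Finset.add_sum_erase _ (fun c' => M (c, c')) (Finset.mem_univ c)]
    exact hrow c
  have hr0 : ∀ c, 0 ≤ r c := fun c => Finset.sum_nonneg fun _ _ => hM0 _
  have hsumr : ∑ c, r c = h := by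
    have : ∀ c ∈ Finset.univ, r c = (n : ℝ) - M (c, c) := fun c _ => by linarith [hrc c]
    rw [Finset.sum_congr rfl this, Finset.sum_sub_distrib, Finset.sum_const,
      Finset.card_univ, Fintype.card_fin, nsmul_eq_mul]
    linarith [hdiagR]
  have hrh : ∀ c, r c ≤ h := fun c => by
    rw [← hsumr]
    exact Finset.single_le_sum (fun c _ => hr0 c) (Finset.mem_univ c)
  have hoffb : ∀ c, ∑ c' ∈ Finset.univ.erase c, (M (c, c')) ^ 2 ≤ r c * h := by
    intro c
    calc ∑ c' ∈ Finset.univ.erase c, (M (c, c')) ^ 2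
        ≤ ∑ c' ∈ Finset.univ.erase c, M (c, c') * h := by
          refine Finset.sum_le_sum fun c' hc' => ?_
          have h1 : M (c, c') ≤ r c :=
            Finset.single_le_sum (fun x _ => hM0 (c, x)) hc'
          have h2 : M (c, c') ≤ h := h1.trans (hrh c)
          nlinarith [hM0 (c, c')]
      _ = r c * h := by rw [← Finset.sum_mul, hr]
  have hsq : ∑ v, (M v) ^ 2 ≤ K * n ^ 2 - 2 * n * h + 2 * h * h := by
    have step : ∑ v, (M v) ^ 2 = ∑ c, ((M (c, c)) ^ 2 + ∑ c' ∈ Finset.univ.erase c, (M (c, c')) ^ 2) := by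
      rw [Fintype.sum_prod_type]
      exact Finset.sum_congr rfl fun c _ =>
        (Finset.add_sum_erase _ _ (Finset.mem_univ c)).symm
    rw [step]
    calc ∑ c, ((M (c, c)) ^ 2 + ∑ c' ∈ Finset.univ.erase c, (M (c, c')) ^ 2)
        ≤ ∑ c, (((n : ℝ) - r c) ^ 2 + r c * h) := by
          refine Finset.sum_le_sum fun c _ => ?_
          have h1 : M (c, c) = (n : ℝ) - r c := by linarith [hrc c]
          rw [h1]
          exact add_le_add le_rfl (hoffb c)
      _ = ∑ c, ((n : ℝ) ^ 2 - 2 * n * r c + ((r c) ^ 2 + r c * h)) := by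
          refine Finset.sum_congr rfl fun c _ => ?_; ring
      _ ≤ ∑ c, ((n : ℝ) ^ 2 - 2 * n * r c + 2 * h * r c) := by
          refine Finset.sum_le_sum fun c _ => ?_
          have := hrh c; have := hr0 c
          nlinarith
      _ = K * n ^ 2 - 2 * n * h + 2 * h * h := by
          simp only [Finset.sum_add_distrib, Finset.sum_sub_distrib, ← Finset.mul_sum,
            Finset.sum_const, Finset.card_univ, Fintype.card_fin, nsmul_eq_mul, hsumr]
          try ring
  linarith [hidR, hsq]

set_option maxHeartbeats 2000000 in
lemma edge_lower_B (n K : ℕ) (hK : 1 ≤ K) {g : Fin (n * K) → Fin K} (hg : balanced n K g) :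
    ∃ ρ : Equiv.Perm (Fin K),
      (n : ℝ) * min ((Finset.univ.filter fun i => g i ≠ ρ (truth n K i)).card : ℝ) n
        ≤ ed n K g := by
  haveI : Nonempty (Fin K) := Fin.pos_iff_nonempty.mp (by omega)
  set M : Fin K × Fin K → ℝ := fun v => (fib n K (fun i => (truth n K i, g i)) v : ℝ) with hM
  have hM0 : ∀ v, 0 ≤ M v := fun v => Nat.cast_nonneg _
  have hrow : ∀ c, ∑ c', M (c, c') = (n : ℝ) := fun c => by
    rw [hM, ← Nat.cast_sum]; exact_mod_cast row_sum n K g c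
  have hcol : ∀ c', ∑ c, M (c, c') = (n : ℝ) := fun c' => by
    rw [hM, ← Nat.cast_sum]; exact_mod_cast col_sum n K hg c'
  have hidR : (ed n K g : ℝ) + ∑ v, (M v) ^ 2 = K * n ^ 2 := by
    have := ed_identity n K hg
    have := congrArg (fun x : ℕ => (x : ℝ)) this
    push_cast at this
    simpa [hM] using this
  have hMn : ∀ c c', M (c, c') ≤ n := fun c c' => by
    rw [← hrow c]
    exact Finset.single_le_sum (fun x _ => hM0 (c, x)) (Finset.mem_univ c')
  have ham : ∀ c : Fin K, ∃ c', ∀ c'', M (c, c'') ≤ M (c, c') := by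
    intro c
    obtain ⟨c', -, hc'⟩ := Finset.exists_max_image Finset.univ (fun c' => M (c, c'))
      Finset.univ_nonempty
    exact ⟨c', fun c'' => hc' c'' (Finset.mem_univ _)⟩
  choose am ham using ham
  have hsumsq : ∑ v, (M v) ^ 2 ≤ ∑ c, (n : ℝ) * M (c, am c) := by
    rw [Fintype.sum_prod_type]
    refine Finset.sum_le_sum fun c _ => ?_
    calc ∑ c', (M (c, c')) ^ 2 ≤ ∑ c', M (c, c') * M (c, am c) := by
          refine Finset.sum_le_sum fun c' _ => ?_
          have := ham c c'
          nlinarith [hM0 (c, c')]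
      _ = (n : ℝ) * M (c, am c) := by rw [← Finset.sum_mul, hrow c]
  by_cases hinj : Function.Injective am
  · set π := Equiv.ofBijective am ((Finite.injective_iff_bijective).mp hinj) with hπ
    have hπa : ∀ c, π c = am c := fun c => rfl
    refine ⟨π, ?_⟩
    set H : ℝ := ((Finset.univ.filter fun i => g i ≠ π (truth n K i)).card : ℝ) with hH
    have hagree : ∑ c, M (c, am c)
        = ((Finset.univ.filter fun i => g i = π (truth n K i)).card : ℝ) := by
      rw [Finset.card_eq_sum_card_fiberwise (f := fun i => truth n K i) (t := Finset.univ)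
        (fun x _ => Finset.mem_univ _)]
      rw [Nat.cast_sum]
      refine Finset.sum_congr rfl fun c _ => ?_
      have hset : (Finset.univ.filter fun i => (fun i => (truth n K i, g i)) i = (c, am c))
          = (Finset.univ.filter fun i => g i = π (truth n K i)).filter
              (fun i => truth n K i = c) := by
        ext i
        simp only [Finset.mem_filter, Finset.mem_univ, true_and, Prod.mk.injEq]
        constructor
        · rintro ⟨h1, h2⟩
          exact ⟨by rw [h1, hπa]; exact h2, h1⟩
        · rintro ⟨h1, h2⟩
          refine ⟨h2, ?_⟩
          rw [h2, hπa] at h1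
          exact h1
      calc M (c, am c)
          = ((Finset.univ.filter fun i =>
              (fun i => (truth n K i, g i)) i = (c, am c)).card : ℝ) := rfl
        _ = _ := by rw [hset]
    have hsplitn : H + ((Finset.univ.filter fun i => g i = π (truth n K i)).card : ℝ)
        = n * K := by
      have h0 := Finset.card_filter_add_card_filter_not
        (s := (Finset.univ : Finset (Fin (n*K)))) (p := fun i => g i = π (truth n K i))
      have hcard : (Finset.univ : Finset (Fin (n*K))).card = n * K := by simp
      have hne : (Finset.univ.filter fun i => g i ≠ π (truth n K i))
          = (Finset.univ.filter fun i => ¬ g i = π (truth n K i)) := rfl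
      have hnat : (Finset.univ.filter fun i => g i ≠ π (truth n K i)).card
          + (Finset.univ.filter fun i => g i = π (truth n K i)).card = n * K := by
        rw [hne]; omega
      rw [hH]
      exact_mod_cast hnat
    have hedge : (n : ℝ) * H ≤ ed n K g := by
      have h1 : ∑ c, (n : ℝ) * M (c, am c) = n * (n * K - H) := by
        have hc : ((Finset.univ.filter fun i => g i = π (truth n K i)).card : ℝ)
            = n * K - H := by linarith [hsplitn]
        rw [← Finset.mul_sum, hagree, hc]
      have h2 : ∑ v, (M v) ^ 2 ≤ n * (n * K - H) := h1 ▸ hsumsq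
      nlinarith [hidR]
    calc (n : ℝ) * min H n ≤ n * H :=
          mul_le_mul_of_nonneg_left (min_le_left _ _) (Nat.cast_nonneg _)
      _ ≤ ed n K g := hedge
  · rw [Function.not_injective_iff] at hinj
    obtain ⟨c1, c2, hsame, hne⟩ := hinj
    refine ⟨1, ?_⟩
    have hK2 : (2 : ℕ) ≤ K := by
      have := Fintype.one_lt_card_iff.mpr ⟨c1, c2, hne⟩
      rwa [Fintype.card_fin] at this
    have hbig : ∑ c, M (c, am c) ≤ ((K : ℝ) - 1) * n := by
      have hmem2 : c2 ∈ Finset.univ.erase c1 :=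
        Finset.mem_erase.mpr ⟨fun hc => hne hc.symm, Finset.mem_univ _⟩
      rw [← Finset.add_sum_erase _ _ (Finset.mem_univ c1),
        ← Finset.add_sum_erase _ _ hmem2]
      have hpair : M (c1, am c1) + M (c2, am c2) ≤ n := by
        rw [hsame]
        calc M (c1, am c2) + M (c2, am c2)
            = ∑ c ∈ ({c1, c2} : Finset (Fin K)), M (c, am c2) := by
              rw [Finset.sum_pair hne]
          _ ≤ ∑ c, M (c, am c2) := Finset.sum_le_sum_of_subset_of_nonneg
              (Finset.subset_univ _) (fun c _ _ => hM0 _)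
          _ = n := hcol (am c2)
      have hrest : ∑ c ∈ (Finset.univ.erase c1).erase c2, M (c, am c)
          ≤ ((K : ℝ) - 2) * n := by
        calc ∑ c ∈ (Finset.univ.erase c1).erase c2, M (c, am c)
            ≤ ∑ _c ∈ (Finset.univ.erase c1).erase c2, (n : ℝ) :=
              Finset.sum_le_sum fun c _ => hMn c (am c)
          _ = (((Finset.univ.erase c1).erase c2).card : ℝ) * n := by
              rw [Finset.sum_const, nsmul_eq_mul]
          _ = ((K : ℝ) - 2) * n := by
              rw [Finset.card_erase_of_mem hmem2, Finset.card_erase_of_mem (Finset.mem_univ _),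
                Finset.card_univ, Fintype.card_fin]
              congr 1
              have : ((K - 1 - 1 : ℕ) : ℝ) = (K : ℝ) - 2 := by
                have : (1:ℕ) ≤ K - 1 := by omega
                push_cast [Nat.cast_sub (by omega : 1 ≤ K), Nat.cast_sub this]
                push_cast [Nat.cast_sub (by omega : 1 ≤ K)]
                ring
              exact this
      linarith
    have hedge : (n : ℝ) * n ≤ ed n K g := by
      have h2 : ∑ v, (M v) ^ 2 ≤ n * (((K : ℝ) - 1) * n) := by
        calc ∑ v, (M v) ^ 2 ≤ ∑ c, (n : ℝ) * M (c, am c) := hsumsq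
          _ = n * ∑ c, M (c, am c) := by rw [Finset.mul_sum]
          _ ≤ n * (((K : ℝ) - 1) * n) :=
            mul_le_mul_of_nonneg_left hbig (Nat.cast_nonneg _)
      nlinarith [hidR]
    calc (n : ℝ) * min ((Finset.univ.filter fun i =>
            g i ≠ (1 : Equiv.Perm (Fin K)) (truth n K i)).card : ℝ) n
        ≤ (n : ℝ) * n :=
          mul_le_mul_of_nonneg_left (min_le_right _ _) (Nat.cast_nonneg _)
      _ ≤ ed n K g := hedge


lemma ed_perm (n K : ℕ) (σ : Fin (n * K) → Fin K) (π : Equiv.Perm (Fin K)) :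
    ed n K (fun i => π.symm (σ i)) = ed n K σ := by
  unfold ed
  congr 1
  apply Finset.filter_congr
  intro e _
  have : (π.symm (σ e.1.1) = π.symm (σ e.1.2)) ↔ (σ e.1.1 = σ e.1.2) :=
    ⟨fun h => π.symm.injective h, fun h => by rw [h]⟩
  rw [this]

lemma balanced_perm (n K : ℕ) {σ : Fin (n * K) → Fin K} (hσ : balanced n K σ)
    (π : Equiv.Perm (Fin K)) : balanced n K (fun i => π.symm (σ i)) := by
  intro c
  have : (Finset.univ.filter fun i => π.symm (σ i) = c)
      = (Finset.univ.filter fun i => σ i = π c) := by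
    apply Finset.filter_congr
    intro i _
    rw [Equiv.symm_apply_eq]
  rw [this]
  exact hσ (π c)

lemma hamP_perm (n K : ℕ) (σ : Fin (n * K) → Fin K) (π ρ : Equiv.Perm (Fin K)) :
    (Finset.univ.filter fun i => (fun i => π.symm (σ i)) i ≠ ρ (truth n K i)).card
      = hamP n K σ (π * ρ) := by
  unfold hamP
  congr 1
  apply Finset.filter_congr
  intro i _
  have h2 : π (ρ (truth n K i)) = (π * ρ) (truth n K i) := rfl
  have : (π.symm (σ i) = ρ (truth n K i)) ↔ (σ i = (π * ρ) (truth n K i)) := by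
    rw [Equiv.symm_apply_eq, h2]
  rw [not_iff_not]
  exact this

lemma mm_le (n K : ℕ) (σ : Fin (n * K) → Fin K) (π : Equiv.Perm (Fin K)) :
    mm n K σ ≤ hamP n K σ π := by
  unfold mm
  exact Finset.inf'_le _ (Finset.mem_univ π)

lemma mm_exists (n K : ℕ) (σ : Fin (n * K) → Fin K) :
    ∃ π : Equiv.Perm (Fin K), hamP n K σ π = mm n K σ := by
  unfold mm
  obtain ⟨π, -, hπ⟩ := Finset.exists_mem_eq_inf' (s := Finset.univ)
    Finset.univ_nonempty (hamP n K σ)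
  exact ⟨π, hπ.symm⟩

lemma main_lower_A (n K : ℕ) {σ : Fin (n * K) → Fin K} (hσ : balanced n K σ) :
    2 * (mm n K σ : ℝ) * (n - (mm n K σ : ℝ)) ≤ ed n K σ := by
  obtain ⟨π, hπ⟩ := mm_exists n K σ
  have hA := edge_lower_A n K (balanced_perm n K hσ π)
  rw [ed_perm n K σ π] at hA
  have hh : (Finset.univ.filter fun i => (fun i => π.symm (σ i)) i ≠ truth n K i).card
      = mm n K σ := by
    rw [← hπ]
    have := hamP_perm n K σ π 1
    simp at this ⊢
    convert this using 2
    ext i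
    simp only [Finset.mem_filter, Finset.mem_univ, true_and]
    exact ⟨fun h => Finset.mem_filter.mpr ⟨Finset.mem_univ _, h⟩, fun h => (Finset.mem_filter.mp h).2⟩
  rw [hh] at hA
  exact hA

lemma main_lower_B (n K : ℕ) (hK : 1 ≤ K) {σ : Fin (n * K) → Fin K} (hσ : balanced n K σ) :
    (n : ℝ) * min ((mm n K σ : ℝ)) n ≤ ed n K σ := by
  obtain ⟨π, hπ⟩ := mm_exists n K σ
  obtain ⟨ρ, hB⟩ := edge_lower_B n K hK (balanced_perm n K hσ π)
  rw [ed_perm n K σ π] at hB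
  have hh : (Finset.univ.filter fun i => (fun i => π.symm (σ i)) i ≠ ρ (truth n K i)).card
      = hamP n K σ (π * ρ) := hamP_perm n K σ π ρ
  rw [hh] at hB
  refine le_trans ?_ hB
  apply mul_le_mul_of_nonneg_left _ (Nat.cast_nonneg _)
  apply min_le_min _ le_rfl
  exact_mod_cast mm_le n K σ (π * ρ)


lemma count_ham (n K : ℕ) (f₀ : Fin (n * K) → Fin K) {y : ℝ} (hy : 0 ≤ y) :
    ∑ σ : Fin (n * K) → Fin K,
        y ^ ((Finset.univ.filter fun i => σ i ≠ f₀ i).card)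
      = (1 + ((K : ℝ) - 1) * y) ^ (n * K) := by
  rcases Nat.eq_zero_or_pos K with hK | hK
  · subst hK
    haveI : IsEmpty (Fin (n * 0)) := by
      rw [Nat.mul_zero]; infer_instance
    haveI : Unique (Fin (n * 0) → Fin 0) := Pi.uniqueOfIsEmpty _
    rw [Fintype.sum_unique, Finset.univ_eq_empty, Finset.filter_empty, Finset.card_empty,
      pow_zero, Nat.mul_zero, pow_zero]
  have key : ∀ σ : Fin (n * K) → Fin K,
      y ^ ((Finset.univ.filter fun i => σ i ≠ f₀ i).card)
        = ∏ i, (if σ i = f₀ i then (1 : ℝ) else y) := by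
    intro σ
    rw [Finset.prod_ite, Finset.prod_const_one, Finset.prod_const, one_mul]
  rw [Finset.sum_congr rfl fun σ _ => key σ]
  rw [← Fintype.prod_sum (fun i (j : Fin K) => if j = f₀ i then (1 : ℝ) else y)]
  have hfac : ∀ i : Fin (n * K), ∑ j : Fin K, (if j = f₀ i then (1 : ℝ) else y)
      = 1 + ((K : ℝ) - 1) * y := by
    intro i
    rw [Finset.sum_ite, Finset.sum_const, Finset.sum_const, nsmul_eq_mul, nsmul_eq_mul]
    have h1 : (Finset.univ.filter fun j => j = f₀ i) = {f₀ i} := by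
      ext j
      simp [Finset.mem_filter]
    have hsplit := Finset.card_filter_add_card_filter_not
      (s := (Finset.univ : Finset (Fin K))) (p := fun j => j = f₀ i)
    have hcardK : (Finset.univ : Finset (Fin K)).card = K := by simp
    have h2 : (Finset.univ.filter fun j => ¬ j = f₀ i).card = K - 1 := by
      rw [h1] at hsplit
      simp only [Finset.card_singleton] at hsplit
      omega
    rw [h1, h2, Finset.card_singleton]
    have : ((K - 1 : ℕ) : ℝ) = (K : ℝ) - 1 := by
      push_cast [Nat.cast_sub hK]
      ring
    rw [this]
    ring
  calc ∏ i : Fin (n * K), ∑ j : Fin K, (if j = f₀ i then (1 : ℝ) else y)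
      = ∏ _i : Fin (n * K), (1 + ((K : ℝ) - 1) * y) :=
        Finset.prod_congr rfl fun i _ => hfac i
    _ = (1 + ((K : ℝ) - 1) * y) ^ (n * K) := by
        rw [Finset.prod_const, Finset.card_univ, Fintype.card_fin]


lemma sum_bad (n K : ℕ) {y : ℝ} (hy : 0 ≤ y) :
    ∑ σ ∈ badSet n K, y ^ (mm n K σ)
      ≤ (K.factorial : ℝ) * ((1 + ((K : ℝ) - 1) * y) ^ (n * K) - 1) := by
  classical
  have step1 : ∀ σ ∈ badSet n K,
      y ^ (mm n K σ) ≤ ∑ π : Equiv.Perm (Fin K), y ^ (hamP n K σ π) := by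
    intro σ _
    obtain ⟨π₀, hπ₀⟩ := mm_exists n K σ
    rw [← hπ₀]
    exact Finset.single_le_sum (fun π _ => pow_nonneg hy _) (Finset.mem_univ π₀)
  have step2 : ∑ σ ∈ badSet n K, y ^ (mm n K σ)
      ≤ ∑ π : Equiv.Perm (Fin K), ∑ σ ∈ badSet n K, y ^ (hamP n K σ π) := by
    rw [Finset.sum_comm]
    exact Finset.sum_le_sum step1
  have step3 : ∀ π : Equiv.Perm (Fin K),
      ∑ σ ∈ badSet n K, y ^ (hamP n K σ π)
        ≤ (1 + ((K : ℝ) - 1) * y) ^ (n * K) - 1 := by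
    intro π
    have hsub : badSet n K ⊆ Finset.univ.erase (⇑π ∘ truth n K) := by
      intro σ hσ
      refine Finset.mem_erase.mpr ⟨?_, Finset.mem_univ _⟩
      intro hc
      exact (mem_badSet.mp hσ).2 ⟨π, hc⟩
    calc ∑ σ ∈ badSet n K, y ^ (hamP n K σ π)
        ≤ ∑ σ ∈ Finset.univ.erase (⇑π ∘ truth n K), y ^ (hamP n K σ π) :=
          Finset.sum_le_sum_of_subset_of_nonneg hsub
            (fun σ _ _ => pow_nonneg hy _)
      _ = (∑ σ : Fin (n * K) → Fin K, y ^ (hamP n K σ π))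
            - y ^ (hamP n K (⇑π ∘ truth n K) π) := by
          rw [Finset.sum_erase_eq_sub (Finset.mem_univ _)]
      _ = (1 + ((K : ℝ) - 1) * y) ^ (n * K) - 1 := by
          have h1 : ∑ σ : Fin (n * K) → Fin K, y ^ (hamP n K σ π)
              = (1 + ((K : ℝ) - 1) * y) ^ (n * K) :=
            count_ham n K (fun i => π (truth n K i)) hy
          have h2 : hamP n K (⇑π ∘ truth n K) π = 0 := by
            unfold hamP
            rw [Finset.card_eq_zero]
            apply Finset.filter_false_of_mem
            intro i _
            simp [Function.comp]
          rw [h1, h2, pow_zero]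
  calc ∑ σ ∈ badSet n K, y ^ (mm n K σ)
      ≤ ∑ π : Equiv.Perm (Fin K), ∑ σ ∈ badSet n K, y ^ (hamP n K σ π) := step2
    _ ≤ ∑ _π : Equiv.Perm (Fin K), ((1 + ((K : ℝ) - 1) * y) ^ (n * K) - 1) :=
        Finset.sum_le_sum fun π _ => step3 π
    _ = (K.factorial : ℝ) * ((1 + ((K : ℝ) - 1) * y) ^ (n * K) - 1) := by
        rw [Finset.sum_const, Finset.card_univ, Fintype.card_perm, Fintype.card_fin,
          nsmul_eq_mul]


lemma colMass_eq (L : ℕ) (c : Fin L → ℝ) (n : ℕ) (x : Fin (L + 1)) :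
    colMass L c n x = ENNReal.ofReal (F L c n x) := by
  induction x using Fin.cases with
  | zero => simp [colMass, F]
  | succ j => simp [colMass, F]

lemma F_sum (L : ℕ) (c : Fin L → ℝ) (n : ℕ) : ∑ x, F L c n x = 1 := by
  rw [Fin.sum_univ_succ]
  have h0 : F L c n 0 = 1 - (∑ j, c j) * Real.log n / n := by simp [F]
  have hs : ∀ j : Fin L, F L c n j.succ = c j * Real.log n / n := fun j => by simp [F]
  rw [h0, Finset.sum_congr rfl (fun j _ => hs j)]
  rw [← Finset.sum_div, ← Finset.sum_mul]
  ring

lemma F_nonneg (L : ℕ) {c : Fin L → ℝ} (hc : ∀ ℓ, 0 ≤ c ℓ) {n : ℕ} (hn : 1 ≤ n)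
    (h1 : (∑ j, c j) * Real.log n / n ≤ 1) : ∀ x, 0 ≤ F L c n x := by
  intro x
  induction x using Fin.cases with
  | zero =>
    have : F L c n 0 = 1 - (∑ j, c j) * Real.log n / n := by simp [F]
    rw [this]
    linarith
  | succ j =>
    have : F L c n j.succ = c j * Real.log n / n := by simp [F]
    rw [this]
    have hlog : 0 ≤ Real.log n := Real.log_nonneg (by exact_mod_cast hn)
    have := hc j
    positivity


lemma colDist_apply (L : ℕ) (c : Fin L → ℝ) (n : ℕ) (s : Set (Fin (L + 1)))
    (hs : MeasurableSet s) :
    colDist L c n s = ∑ ℓ : Fin (L + 1), s.indicator (fun _ => colMass L c n ℓ) ℓ := by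
  rw [colDist, Measure.finset_sum_apply]
  refine Finset.sum_congr rfl fun ℓ _ => ?_
  rw [Measure.smul_apply, Measure.dirac_apply' _ hs, smul_eq_mul]
  by_cases h : ℓ ∈ s <;> simp [Set.indicator_of_mem, Set.indicator_of_notMem, h]

lemma colDist_singleton (L : ℕ) (c : Fin L → ℝ) (n : ℕ) (x : Fin (L + 1)) :
    colDist L c n {x} = colMass L c n x := by
  rw [colDist_apply L c n {x} (measurableSet_singleton x)]
  rw [Finset.sum_eq_single x]
  · simp [Set.indicator_of_mem]
  · intro ℓ _ hℓ
    simp [Set.indicator_of_notMem, hℓ]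
  · intro h
    exact absurd (Finset.mem_univ x) h

lemma colDist_univ (L : ℕ) (c : Fin L → ℝ) (n : ℕ) (hF : ∀ x, 0 ≤ F L c n x) :
    colDist L c n Set.univ = 1 := by
  rw [colDist_apply L c n Set.univ MeasurableSet.univ]
  simp only [Set.indicator_univ]
  have : ∀ ℓ : Fin (L+1), colMass L c n ℓ = ENNReal.ofReal (F L c n ℓ) := colMass_eq L c n
  rw [Finset.sum_congr rfl fun ℓ _ => this ℓ, ← ENNReal.ofReal_sum_of_nonneg
    (fun ℓ _ => hF ℓ), F_sum]
  simp

instance colDist_finite (L : ℕ) (c : Fin L → ℝ) (n : ℕ) :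
    IsFiniteMeasure (colDist L c n) := by
  constructor
  rw [colDist_apply L c n Set.univ MeasurableSet.univ]
  simp only [Set.indicator_univ]
  refine ENNReal.sum_lt_top.mpr fun ℓ _ => ?_
  rw [colMass_eq]
  exact ENNReal.ofReal_lt_top

instance edgeMeasure_finite (n K L : ℕ) (a b : Fin L → ℝ) (e : Edge n K) :
    IsFiniteMeasure (edgeMeasure n K L a b e) := by
  unfold edgeMeasure
  split <;> infer_instance

lemma sbm_singleton (n K L : ℕ) (a b : Fin L → ℝ) (w : Edge n K → Fin (L + 1)) :
    sbm n K L a b {w} = likelihood n K L a b (truth n K) w := by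
  rw [sbm, ← Set.univ_pi_singleton w, Measure.pi_pi]
  unfold likelihood
  refine Finset.prod_congr rfl fun e _ => ?_
  unfold edgeMeasure
  split <;> rw [colDist_singleton]

lemma sbm_univ (n K L : ℕ) (a b : Fin L → ℝ) (hFa : ∀ x, 0 ≤ F L a n x)
    (hFb : ∀ x, 0 ≤ F L b n x) : sbm n K L a b Set.univ = 1 := by
  rw [sbm, Measure.pi_univ]
  rw [Finset.prod_congr rfl fun (e : Edge n K) _ => show edgeMeasure n K L a b e Set.univ = 1 by
    unfold edgeMeasure
    split
    · exact colDist_univ L a n hFa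
    · exact colDist_univ L b n hFb]
  simp

lemma meas_all {n K L : ℕ} (S : Set (Edge n K → Fin (L + 1))) : MeasurableSet S := by
  have : S = ⋃ w ∈ S, {w} := by simp
  rw [this]
  refine MeasurableSet.biUnion (Set.to_countable S) fun w _ => ?_
  rw [← Set.univ_pi_singleton w]
  exact MeasurableSet.univ_pi fun e => measurableSet_singleton _


lemma sqrt_prod {ι : Type*} (s : Finset ι) (f : ι → ℝ) (hf : ∀ i ∈ s, 0 ≤ f i) :
    Real.sqrt (∏ i ∈ s, f i) = ∏ i ∈ s, Real.sqrt (f i) := by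
  classical
  induction s using Finset.induction_on with
  | empty => simp
  | insert x s' hx ih =>
    rw [Finset.prod_insert hx, Finset.prod_insert hx,
      Real.sqrt_mul (hf x (Finset.mem_insert_self _ _)),
      ih (fun i hi => hf i (Finset.mem_insert_of_mem hi))]


lemma G_nonneg {n K L : ℕ} {a b : Fin L → ℝ} {σ} (hFa : ∀ x, 0 ≤ F L a n x)
    (hFb : ∀ x, 0 ≤ F L b n x) (w : Edge n K → Fin (L + 1)) : 0 ≤ G n K L a b σ w :=
  Finset.prod_nonneg fun e _ => by split <;> [exact hFa _; exact hFb _]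

lemma likelihood_eq {n K L : ℕ} {a b : Fin L → ℝ} (hFa : ∀ x, 0 ≤ F L a n x)
    (hFb : ∀ x, 0 ≤ F L b n x) (σ : Fin (n * K) → Fin K) (w : Edge n K → Fin (L + 1)) :
    likelihood n K L a b σ w = ENNReal.ofReal (G n K L a b σ w) := by
  unfold likelihood G
  rw [ENNReal.ofReal_prod_of_nonneg fun e _ => by split <;> [exact hFa _; exact hFb _]]
  refine Finset.prod_congr rfl fun e _ => ?_
  split <;> rw [colMass_eq]

lemma measure_E (n K L : ℕ) (a b : Fin L → ℝ) (hFa : ∀ x, 0 ≤ F L a n x)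
    (hFb : ∀ x, 0 ≤ F L b n x) (σ : Fin (n * K) → Fin K) :
    sbm n K L a b {w | likelihood n K L a b (truth n K) w ≤ likelihood n K L a b σ w}
      ≤ ENNReal.ofReal ((∑ x, Real.sqrt (F L a n x * F L b n x)) ^ (ed n K σ)) := by
  classical
  set ρ : ℝ := ∑ x, Real.sqrt (F L a n x * F L b n x) with hρ
  set Hf : Edge n K → Fin (L + 1) → ℝ := fun e x =>
    Real.sqrt ((if truth n K e.1.1 = truth n K e.1.2 then F L a n x else F L b n x)
      * (if σ e.1.1 = σ e.1.2 then F L a n x else F L b n x)) with hHf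
  set T : Finset (Edge n K → Fin (L + 1)) :=
    Finset.univ.filter fun w => G n K L a b (truth n K) w ≤ G n K L a b σ w with hT
  have hsub : {w | likelihood n K L a b (truth n K) w ≤ likelihood n K L a b σ w}
      ⊆ (T : Set (Edge n K → Fin (L + 1))) := by
    intro w hw
    simp only [Set.mem_setOf_eq] at hw
    rw [likelihood_eq hFa hFb, likelihood_eq hFa hFb] at hw
    have := (ENNReal.ofReal_le_ofReal_iff (G_nonneg hFa hFb w)).mp hw
    exact Finset.mem_coe.mpr (Finset.mem_filter.mpr ⟨Finset.mem_univ _, this⟩)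
  have hcover : sbm n K L a b (T : Set (Edge n K → Fin (L + 1)))
      ≤ ∑ w ∈ T, sbm n K L a b {w} := by
    have : (T : Set (Edge n K → Fin (L + 1))) = ⋃ w ∈ T, {w} := by
      ext v; simp
    rw [this]
    exact measure_biUnion_finset_le T _
  have hpoint : ∀ w ∈ T, G n K L a b (truth n K) w ≤ ∏ e, Hf e (w e) := by
    intro w hw
    have hle : G n K L a b (truth n K) w ≤ G n K L a b σ w := (Finset.mem_filter.mp hw).2
    have hprod : ∏ e, Hf e (w e)
        = Real.sqrt (G n K L a b (truth n K) w * G n K L a b σ w) := by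
      have hGG : G n K L a b (truth n K) w * G n K L a b σ w
          = ∏ e, ((if truth n K e.1.1 = truth n K e.1.2 then F L a n (w e) else F L b n (w e))
            * (if σ e.1.1 = σ e.1.2 then F L a n (w e) else F L b n (w e))) := by
        unfold G
        rw [← Finset.prod_mul_distrib]
      rw [hGG, sqrt_prod _ _ fun e _ => mul_nonneg (by split <;> [exact hFa _; exact hFb _])
        (by split <;> [exact hFa _; exact hFb _])]
    rw [hprod]
    calc G n K L a b (truth n K) w
        = Real.sqrt (G n K L a b (truth n K) w * G n K L a b (truth n K) w) :=
          (Real.sqrt_mul_self (G_nonneg hFa hFb w)).symm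
      _ ≤ Real.sqrt (G n K L a b (truth n K) w * G n K L a b σ w) :=
          Real.sqrt_le_sqrt (mul_le_mul_of_nonneg_left hle (G_nonneg hFa hFb w))
  have hHf_nonneg : ∀ e x, 0 ≤ Hf e x := fun e x => Real.sqrt_nonneg _
  have hfac : ∀ e : Edge n K, ∑ x, Hf e x
      = if ((truth n K e.1.1 = truth n K e.1.2) ↔ (σ e.1.1 = σ e.1.2)) then 1 else ρ := by
    intro e
    by_cases h1 : truth n K e.1.1 = truth n K e.1.2 <;>
      by_cases h2 : σ e.1.1 = σ e.1.2
    · simp only [hHf, h1, h2, if_pos, iff_true]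
      calc ∑ x, Real.sqrt (F L a n x * F L a n x) = ∑ x, F L a n x :=
            Finset.sum_congr rfl fun x _ => Real.sqrt_mul_self (hFa x)
        _ = 1 := F_sum L a n
    · have hiff : ¬((truth n K e.1.1 = truth n K e.1.2) ↔ (σ e.1.1 = σ e.1.2)) := by
        simp [h1, h2]
      rw [if_neg hiff, hρ]
      simp only [hHf, if_pos h1, if_neg h2]
    · have hiff : ¬((truth n K e.1.1 = truth n K e.1.2) ↔ (σ e.1.1 = σ e.1.2)) := by
        simp [h1, h2]
      rw [if_neg hiff, hρ]
      simp only [hHf, if_neg h1, if_pos h2]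
      exact Finset.sum_congr rfl fun x _ => by rw [mul_comm]
    · have hiff : ((truth n K e.1.1 = truth n K e.1.2) ↔ (σ e.1.1 = σ e.1.2)) := by
        simp [h1, h2]
      rw [if_pos hiff]
      simp only [hHf, if_neg h1, if_neg h2]
      calc ∑ x, Real.sqrt (F L b n x * F L b n x) = ∑ x, F L b n x :=
            Finset.sum_congr rfl fun x _ => Real.sqrt_mul_self (hFb x)
        _ = 1 := F_sum L b n
  calc sbm n K L a b {w | likelihood n K L a b (truth n K) w ≤ likelihood n K L a b σ w}
      ≤ sbm n K L a b (T : Set (Edge n K → Fin (L + 1))) := measure_mono hsub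
    _ ≤ ∑ w ∈ T, sbm n K L a b {w} := hcover
    _ = ∑ w ∈ T, ENNReal.ofReal (G n K L a b (truth n K) w) := by
        refine Finset.sum_congr rfl fun w _ => ?_
        rw [sbm_singleton, likelihood_eq hFa hFb]
    _ ≤ ∑ w ∈ T, ENNReal.ofReal (∏ e, Hf e (w e)) := by
        refine Finset.sum_le_sum fun w hw => ?_
        exact ENNReal.ofReal_le_ofReal (hpoint w hw)
    _ ≤ ∑ w : Edge n K → Fin (L + 1), ENNReal.ofReal (∏ e, Hf e (w e)) :=
        Finset.sum_le_sum_of_subset (Finset.filter_subset _ _)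
    _ = ENNReal.ofReal (∑ w : Edge n K → Fin (L + 1), ∏ e, Hf e (w e)) := by
        rw [ENNReal.ofReal_sum_of_nonneg fun w _ =>
          Finset.prod_nonneg fun e _ => hHf_nonneg e (w e)]
    _ = ENNReal.ofReal (∏ e : Edge n K, ∑ x, Hf e x) := by
        rw [← Fintype.prod_sum]
    _ = ENNReal.ofReal (ρ ^ (ed n K σ)) := by
        congr 1
        rw [Finset.prod_congr rfl fun e _ => hfac e, Finset.prod_ite, Finset.prod_const_one,
          Finset.prod_const, one_mul]
        rfl


lemma sqrt_amgm {x y : ℝ} (hx : 0 ≤ x) (hy : 0 ≤ y) :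
    Real.sqrt (x * y) ≤ (x + y) / 2 := by
  rw [Real.sqrt_mul hx]
  nlinarith [sq_nonneg (Real.sqrt x - Real.sqrt y), Real.sq_sqrt hx, Real.sq_sqrt hy,
    Real.sqrt_nonneg x, Real.sqrt_nonneg y]

lemma rho_le (L : ℕ) (a b : Fin L → ℝ) (ha : ∀ ℓ, 0 ≤ a ℓ) (hb : ∀ ℓ, 0 ≤ b ℓ)
    (n : ℕ) (hn : 1 ≤ n) (hFa0 : 0 ≤ F L a n 0) (hFb0 : 0 ≤ F L b n 0) :
    ∑ x, Real.sqrt (F L a n x * F L b n x)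
      ≤ 1 - (∑ ℓ, (Real.sqrt (a ℓ) - Real.sqrt (b ℓ)) ^ 2) / 2 * (Real.log n / n) := by
  have ht : 0 ≤ Real.log n / n :=
    div_nonneg (Real.log_nonneg (by exact_mod_cast hn)) (Nat.cast_nonneg n)
  set t : ℝ := Real.log n / n with htdef
  have hFa0e : F L a n 0 = 1 - (∑ j, a j) * t := by
    show (1 - (∑ j, a j) * Real.log n / n) = _
    rw [mul_div_assoc]
  have hFb0e : F L b n 0 = 1 - (∑ j, b j) * t := by
    show (1 - (∑ j, b j) * Real.log n / n) = _
    rw [mul_div_assoc]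
  have hsucc : ∀ j : Fin L, Real.sqrt (F L a n j.succ * F L b n j.succ)
      = Real.sqrt (a j * b j) * t := by
    intro j
    have h1 : F L a n j.succ = a j * t := by
      show a j * Real.log n / n = _
      rw [mul_div_assoc]
    have h2 : F L b n j.succ = b j * t := by
      show b j * Real.log n / n = _
      rw [mul_div_assoc]
    rw [h1, h2, show a j * t * (b j * t) = (a j * b j) * t ^ 2 by ring,
      Real.sqrt_mul (mul_nonneg (ha j) (hb j)), Real.sqrt_sq ht]
  have hDid : ∑ ℓ, (Real.sqrt (a ℓ) - Real.sqrt (b ℓ)) ^ 2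
      = (∑ ℓ, a ℓ) + (∑ ℓ, b ℓ) - 2 * ∑ ℓ, Real.sqrt (a ℓ) * Real.sqrt (b ℓ) := by
    have : ∀ ℓ ∈ Finset.univ, (Real.sqrt (a ℓ) - Real.sqrt (b ℓ)) ^ 2
        = a ℓ + b ℓ - 2 * (Real.sqrt (a ℓ) * Real.sqrt (b ℓ)) := by
      intro ℓ _
      have h1 := Real.sq_sqrt (ha ℓ)
      have h2 := Real.sq_sqrt (hb ℓ)
      nlinarith
    rw [Finset.sum_congr rfl this]
    simp only [Finset.sum_sub_distrib, Finset.sum_add_distrib, ← Finset.mul_sum]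
  have hsqrtab : ∀ ℓ, Real.sqrt (a ℓ * b ℓ) = Real.sqrt (a ℓ) * Real.sqrt (b ℓ) :=
    fun ℓ => Real.sqrt_mul (ha ℓ) _
  rw [Fin.sum_univ_succ]
  have h0 : Real.sqrt (F L a n 0 * F L b n 0)
      ≤ ((1 - (∑ j, a j) * t) + (1 - (∑ j, b j) * t)) / 2 := by
    rw [← hFa0e, ← hFb0e]
    exact sqrt_amgm hFa0 hFb0
  have hs : ∑ j : Fin L, Real.sqrt (F L a n j.succ * F L b n j.succ)
      = (∑ j, Real.sqrt (a j) * Real.sqrt (b j)) * t := by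
    rw [Finset.sum_congr rfl fun j _ => hsucc j, ← Finset.sum_mul,
      Finset.sum_congr rfl fun j _ => hsqrtab j]
  rw [hs, hDid]
  rw [hFa0e, hFb0e] at h0
  have key : (1 :ℝ) - ((∑ ℓ, a ℓ) + (∑ ℓ, b ℓ)
        - 2 * ∑ ℓ, Real.sqrt (a ℓ) * Real.sqrt (b ℓ)) / 2 * t
      = ((1 - (∑ j, a j) * t) + (1 - (∑ j, b j) * t)) / 2
        + (∑ j, Real.sqrt (a j) * Real.sqrt (b j)) * t := by ring
  rw [key, hFa0e, hFb0e]
  exact add_le_add_left h0 _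



/-! ### Final assembly -/

noncomputable def Bnd (K : ℕ) (D : ℝ) (n : ℕ) : ℝ :=
  (K.factorial : ℝ) * (Real.exp (((n * K : ℕ) : ℝ) * (((K : ℝ) - 1)
      * Real.exp (-((D + 1) / 2) * Real.log n))) - 1)
    + Real.exp (((n * K : ℕ) : ℝ) * Real.log K + (-((D - 1) / 4) * ((n : ℝ) * Real.log n)))

lemma Bnd_nonneg (K : ℕ) (hK : 1 ≤ K) (D : ℝ) (n : ℕ) : 0 ≤ Bnd K D n := by
  unfold Bnd
  have hK1 : (1 : ℝ) ≤ K := by exact_mod_cast hK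
  have h1 : (0 : ℝ) ≤ ((n * K : ℕ) : ℝ) * (((K : ℝ) - 1)
      * Real.exp (-((D + 1) / 2) * Real.log n)) :=
    mul_nonneg (Nat.cast_nonneg _)
      (mul_nonneg (by linarith) (le_of_lt (Real.exp_pos _)))
  have h2 : (1 : ℝ) ≤ Real.exp (((n * K : ℕ) : ℝ) * (((K : ℝ) - 1)
      * Real.exp (-((D + 1) / 2) * Real.log n))) := Real.one_le_exp h1
  have h3 := Real.exp_pos (((n * K : ℕ) : ℝ) * Real.log K
      + (-((D - 1) / 4) * ((n : ℝ) * Real.log n)))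
  have h4 : (0 : ℝ) ≤ (K.factorial : ℝ) := Nat.cast_nonneg _
  nlinarith

lemma main_bound (n K L : ℕ) (a b : Fin L → ℝ) (hK : 2 ≤ K)
    (ha : ∀ ℓ, 0 ≤ a ℓ) (hb : ∀ ℓ, 0 ≤ b ℓ)
    (hD : 1 < ∑ ℓ, (Real.sqrt (a ℓ) - Real.sqrt (b ℓ)) ^ 2)
    (hn : 1 ≤ n) (hFa : ∀ x, 0 ≤ F L a n x) (hFb : ∀ x, 0 ≤ F L b n x) :
    sbm n K L a b (successEvent n K L a b)ᶜ
      ≤ ENNReal.ofReal (Bnd K (∑ ℓ, (Real.sqrt (a ℓ) - Real.sqrt (b ℓ)) ^ 2) n) := by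
  classical
  set D := ∑ ℓ, (Real.sqrt (a ℓ) - Real.sqrt (b ℓ)) ^ 2 with hDdef
  have hD0 : (0 : ℝ) < D := lt_trans one_pos hD
  set t : ℝ := Real.log n / n with htdef
  have hlog : 0 ≤ Real.log n := Real.log_nonneg (by exact_mod_cast hn)
  have hnR : (1 : ℝ) ≤ n := by exact_mod_cast hn
  have ht : 0 ≤ t := div_nonneg hlog (by linarith)
  set y : ℝ := Real.exp (-((D + 1) / 2) * Real.log n) with hydef
  set z : ℝ := Real.exp (-((D - 1) / 4) * ((n : ℝ) * Real.log n)) with hzdef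
  have hy0 : 0 ≤ y := le_of_lt (Real.exp_pos _)
  have hz0 : 0 ≤ z := le_of_lt (Real.exp_pos _)
  have hcover : (successEvent n K L a b)ᶜ ⊆
      ⋃ σ ∈ badSet n K,
        {w | likelihood n K L a b (truth n K) w ≤ likelihood n K L a b σ w} := by
    intro w hw
    rw [Set.mem_compl_iff, successEvent, Set.mem_setOf_eq] at hw
    push_neg at hw
    obtain ⟨σ, hbal, hneq, hle⟩ := hw
    exact Set.mem_biUnion (mem_badSet.mpr ⟨hbal, hneq⟩) hle
  have hperσ : ∀ σ ∈ badSet n K,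
      sbm n K L a b {w | likelihood n K L a b (truth n K) w ≤ likelihood n K L a b σ w}
        ≤ ENNReal.ofReal (y ^ (mm n K σ) + z) := by
    intro σ hσ
    obtain ⟨hbal, hneq⟩ := mem_badSet.mp hσ
    refine (measure_E n K L a b hFa hFb σ).trans (ENNReal.ofReal_le_ofReal ?_)
    have hρ0 : 0 ≤ ∑ x, Real.sqrt (F L a n x * F L b n x) :=
      Finset.sum_nonneg fun x _ => Real.sqrt_nonneg _
    have hρe : ∑ x, Real.sqrt (F L a n x * F L b n x) ≤ Real.exp (-(D / 2 * t)) := by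
      refine (rho_le L a b ha hb n hn (hFa 0) (hFb 0)).trans ?_
      have := Real.add_one_le_exp (-(D / 2 * t))
      have heq : D / 2 * t = D / 2 * (Real.log ↑n / ↑n) := by rw [htdef]
      linarith
    have hpow : (∑ x, Real.sqrt (F L a n x * F L b n x)) ^ (ed n K σ)
        ≤ Real.exp ((ed n K σ : ℝ) * (-(D / 2 * t))) := by
      calc (∑ x, Real.sqrt (F L a n x * F L b n x)) ^ (ed n K σ)
          ≤ (Real.exp (-(D / 2 * t))) ^ (ed n K σ) := pow_le_pow_left₀ hρ0 hρe _
        _ = Real.exp ((ed n K σ : ℝ) * (-(D / 2 * t))) := (Real.exp_nat_mul _ _).symm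
    refine hpow.trans ?_
    set m : ℕ := mm n K σ with hmdef
    have hmR0 : (0 : ℝ) ≤ m := Nat.cast_nonneg _
    have hn0 : (0 : ℝ) < n := by linarith
    by_cases hsmall : (m : ℝ) ≤ (D - 1) / (2 * D) * n
    · have hA := main_lower_A n K hbal
      have hDm : D * (m : ℝ) ≤ (D - 1) / 2 * n := by
        have h2 : D * ((D - 1) / (2 * D) * n) = (D - 1) / 2 * n := by
          field_simp
        calc D * (m : ℝ) ≤ D * ((D - 1) / (2 * D) * n) :=
              mul_le_mul_of_nonneg_left hsmall (le_of_lt hD0)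
          _ = (D - 1) / 2 * n := h2
      have hkey : (D + 1) / 2 * ((m : ℝ) * Real.log n) ≤ D / 2 * t * (ed n K σ) := by
        have hstep1 : (D + 1) / 2 * (n : ℝ) ≤ D * ((n : ℝ) - m) := by linarith
        have hstep2 : ((m : ℝ) * Real.log n) * ((D + 1) / 2 * n)
            ≤ ((m : ℝ) * Real.log n) * (D * ((n : ℝ) - m)) :=
          mul_le_mul_of_nonneg_left hstep1 (mul_nonneg hmR0 hlog)
        have hed1 : D / 2 * t * (2 * (m : ℝ) * ((n : ℝ) - m)) ≤ D / 2 * t * (ed n K σ) :=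
          mul_le_mul_of_nonneg_left hA (by positivity)
        have hexp : D / 2 * t * (2 * (m : ℝ) * ((n : ℝ) - m))
            = ((m : ℝ) * Real.log n) * (D * ((n : ℝ) - m)) / n := by
          rw [htdef]
          field_simp
        have hl : (D + 1) / 2 * ((m : ℝ) * Real.log n)
            = ((m : ℝ) * Real.log n) * ((D + 1) / 2 * n) / n := by
          field_simp
        rw [hl]
        calc ((m : ℝ) * Real.log n) * ((D + 1) / 2 * n) / n
            ≤ ((m : ℝ) * Real.log n) * (D * ((n : ℝ) - m)) / n :=
              (div_le_div_iff_of_pos_right hn0).mpr hstep2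
          _ = D / 2 * t * (2 * (m : ℝ) * ((n : ℝ) - m)) := hexp.symm
          _ ≤ D / 2 * t * (ed n K σ) := hed1
      have hym : y ^ m = Real.exp ((m : ℝ) * (-((D + 1) / 2) * Real.log n)) := by
        rw [hydef, ← Real.exp_nat_mul]
      have hfin : Real.exp ((ed n K σ : ℝ) * -(D / 2 * t)) ≤ y ^ m := by
        rw [hym]
        apply Real.exp_le_exp.mpr
        have e1 : (m : ℝ) * (-((D + 1) / 2) * Real.log n)
            = -((D + 1) / 2 * ((m : ℝ) * Real.log n)) := by ring
        have e2 : (ed n K σ : ℝ) * -(D / 2 * t) = -(D / 2 * t * (ed n K σ)) := by ring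
        rw [e1, e2]
        exact neg_le_neg hkey
      calc Real.exp ((ed n K σ : ℝ) * -(D / 2 * t)) ≤ y ^ m := hfin
        _ ≤ y ^ m + z := le_add_of_nonneg_right hz0
    · push_neg at hsmall
      have hB := main_lower_B n K (by omega) hbal
      have hδ1 : (D - 1) / (2 * D) ≤ 1 := by
        rw [div_le_one (by linarith)]
        linarith
      have hminge : (D - 1) / (2 * D) * n ≤ min ((m : ℝ)) n := by
        refine le_min (le_of_lt hsmall) ?_
        calc (D - 1) / (2 * D) * (n : ℝ) ≤ 1 * n :=
              mul_le_mul_of_nonneg_right hδ1 (by linarith)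
          _ = n := one_mul _
      have hedB : (n : ℝ) * ((D - 1) / (2 * D) * n) ≤ ed n K σ :=
        le_trans (mul_le_mul_of_nonneg_left hminge (by linarith)) hB
      have harg : (ed n K σ : ℝ) * -(D / 2 * t)
          ≤ -((D - 1) / 4) * ((n : ℝ) * Real.log n) := by
        have hc : D / 2 * t * ((n : ℝ) * ((D - 1) / (2 * D) * n))
            = (D - 1) / 4 * ((n : ℝ) * Real.log n) := by
          rw [htdef]
          field_simp
          ring
        have h5 := mul_le_mul_of_nonneg_left hedB (show (0 : ℝ) ≤ D / 2 * t by positivity)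
        nlinarith [h5, hc]
      calc Real.exp ((ed n K σ : ℝ) * -(D / 2 * t))
          ≤ z := by rw [hzdef]; exact Real.exp_le_exp.mpr harg
        _ ≤ y ^ m + z := le_add_of_nonneg_left (pow_nonneg hy0 _)
  have hfinal : ∑ σ ∈ badSet n K, (y ^ (mm n K σ) + z) ≤ Bnd K D n := by
    have hs1 : ∑ σ ∈ badSet n K, (y ^ (mm n K σ) + z)
        = (∑ σ ∈ badSet n K, y ^ (mm n K σ)) + ((badSet n K).card : ℝ) * z := by
      rw [Finset.sum_add_distrib, Finset.sum_const, nsmul_eq_mul]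
    have hs2 := sum_bad n K hy0
    have hcard : ((badSet n K).card : ℝ) ≤ (K : ℝ) ^ (n * K) := by
      have h1 : (badSet n K).card ≤ K ^ (n * K) := by
        calc (badSet n K).card ≤ Fintype.card (Fin (n*K) → Fin K) :=
              Finset.card_le_univ _
          _ = K ^ (n * K) := by
              rw [Fintype.card_fun, Fintype.card_fin, Fintype.card_fin]
      exact_mod_cast h1
    have hexp1 : (1 + ((K : ℝ) - 1) * y) ^ (n * K)
        ≤ Real.exp (((n * K : ℕ) : ℝ) * (((K : ℝ) - 1) * y)) := by
      have hK1 : (1 : ℝ) ≤ K := by exact_mod_cast (by omega : 1 ≤ K)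
      have h1 : 1 + ((K : ℝ) - 1) * y ≤ Real.exp (((K : ℝ) - 1) * y) := by
        have := Real.add_one_le_exp (((K : ℝ) - 1) * y)
        linarith
      have hnn : (0 : ℝ) ≤ 1 + ((K : ℝ) - 1) * y := by
        have := mul_nonneg (by linarith : (0 : ℝ) ≤ (K : ℝ) - 1) hy0
        linarith
      calc (1 + ((K : ℝ) - 1) * y) ^ (n * K)
          ≤ (Real.exp (((K : ℝ) - 1) * y)) ^ (n * K) := pow_le_pow_left₀ hnn h1 _
        _ = Real.exp (((n * K : ℕ) : ℝ) * (((K : ℝ) - 1) * y)) := (Real.exp_nat_mul _ _).symm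
    have hexp2 : (K : ℝ) ^ (n * K) * z
        = Real.exp (((n * K : ℕ) : ℝ) * Real.log K
            + (-((D - 1) / 4) * ((n : ℝ) * Real.log n))) := by
      have hKpos : (0 : ℝ) < K := by exact_mod_cast (by omega : 0 < K)
      rw [Real.exp_add, hzdef]
      congr 1
      rw [Real.exp_nat_mul, Real.exp_log hKpos]
    have hfac0 : (0 : ℝ) ≤ (K.factorial : ℝ) := Nat.cast_nonneg _
    have h6 := mul_le_mul_of_nonneg_left (sub_le_sub_right hexp1 1) hfac0
    have h7 := mul_le_mul_of_nonneg_right hcard hz0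
    unfold Bnd
    rw [hydef] at h6 ⊢
    rw [← hexp2]
    linarith [hs1, hs2]
  calc sbm n K L a b (successEvent n K L a b)ᶜ
      ≤ sbm n K L a b (⋃ σ ∈ badSet n K,
          {w | likelihood n K L a b (truth n K) w ≤ likelihood n K L a b σ w}) :=
        measure_mono hcover
    _ ≤ ∑ σ ∈ badSet n K,
          sbm n K L a b {w | likelihood n K L a b (truth n K) w
            ≤ likelihood n K L a b σ w} := measure_biUnion_finset_le _ _
    _ ≤ ∑ σ ∈ badSet n K, ENNReal.ofReal (y ^ (mm n K σ) + z) := Finset.sum_le_sum hperσ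
    _ = ENNReal.ofReal (∑ σ ∈ badSet n K, (y ^ (mm n K σ) + z)) := by
        rw [ENNReal.ofReal_sum_of_nonneg fun σ _ => add_nonneg (pow_nonneg hy0 _) hz0]
    _ ≤ ENNReal.ofReal (Bnd K D n) := ENNReal.ofReal_le_ofReal hfinal

lemma Bnd_tendsto (K : ℕ) (hK : 2 ≤ K) (D : ℝ) (hD : 1 < D) :
    Tendsto (fun n : ℕ => Bnd K D n) atTop (nhds 0) := by
  have hlogn : Tendsto (fun n : ℕ => Real.log n) atTop atTop :=
    Real.tendsto_log_atTop.comp tendsto_natCast_atTop_atTop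
  have hyarg : Tendsto (fun n : ℕ => ((n * K : ℕ) : ℝ) * (((K : ℝ) - 1)
      * Real.exp (-((D + 1) / 2) * Real.log n))) atTop (nhds 0) := by
    have hney : Tendsto (fun n : ℕ => (n : ℝ) * Real.exp (-((D + 1) / 2) * Real.log n))
        atTop (nhds 0) := by
      have hexp : Tendsto (fun n : ℕ => Real.exp ((1 - (D + 1) / 2) * Real.log n))
          atTop (nhds 0) := by
        apply Real.tendsto_exp_atBot.comp
        exact (tendsto_const_mul_atBot_of_neg (by linarith)).mpr hlogn
      refine hexp.congr' ?_
      filter_upwards [Filter.eventually_ge_atTop 1] with n hn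
      have hn0 : (0 : ℝ) < n := by exact_mod_cast Nat.lt_of_lt_of_le Nat.zero_lt_one hn
      have e : (1 - (D + 1) / 2) * Real.log n
          = Real.log n + (-((D + 1) / 2) * Real.log n) := by ring
      rw [e, Real.exp_add, Real.exp_log hn0]
    have e2 : (fun n : ℕ => ((n * K : ℕ) : ℝ) * (((K : ℝ) - 1)
        * Real.exp (-((D + 1) / 2) * Real.log n)))
        = fun n : ℕ => ((K : ℝ) * ((K : ℝ) - 1))
            * ((n : ℝ) * Real.exp (-((D + 1) / 2) * Real.log n)) := by
      funext n
      push_cast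
      ring
    rw [e2]
    simpa using hney.const_mul ((K : ℝ) * ((K : ℝ) - 1))
  have h1 : Tendsto (fun n : ℕ => (K.factorial : ℝ)
      * (Real.exp (((n * K : ℕ) : ℝ) * (((K : ℝ) - 1)
          * Real.exp (-((D + 1) / 2) * Real.log n))) - 1)) atTop (nhds 0) := by
    have hc := ((Real.continuous_exp.tendsto 0).comp hyarg).sub_const 1
    simp only [Real.exp_zero, sub_self] at hc
    simpa using hc.const_mul (K.factorial : ℝ)
  have h2 : Tendsto (fun n : ℕ => Real.exp (((n * K : ℕ) : ℝ) * Real.log K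
      + (-((D - 1) / 4) * ((n : ℝ) * Real.log n)))) atTop (nhds 0) := by
    apply Real.tendsto_exp_atBot.comp
    have hbound : Tendsto (fun n : ℕ => -(n : ℝ)) atTop atBot :=
      tendsto_neg_atBot_iff.mpr tendsto_natCast_atTop_atTop
    refine tendsto_atBot_mono' atTop ?_ hbound
    have hD1 : (0 : ℝ) < D - 1 := by linarith
    filter_upwards [hlogn.eventually_ge_atTop
      ((4 * ((K : ℝ) * |Real.log K| + 1)) / (D - 1)), Filter.eventually_ge_atTop 1]
      with n hlogbig hn1
    have hn0 : (0 : ℝ) ≤ n := Nat.cast_nonneg _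
    have h3 : (K : ℝ) * |Real.log K| + 1 ≤ (D - 1) / 4 * Real.log n := by
      have hm := mul_le_mul_of_nonneg_left hlogbig
        (le_of_lt (by positivity : (0 : ℝ) < (D - 1) / 4))
      have e : (D - 1) / 4 * (4 * ((K : ℝ) * |Real.log K| + 1) / (D - 1))
          = (K : ℝ) * |Real.log K| + 1 := by
        field_simp
      linarith
    have h4 : (K : ℝ) * Real.log K ≤ (K : ℝ) * |Real.log K| :=
      mul_le_mul_of_nonneg_left (le_abs_self _) (Nat.cast_nonneg K)
    have h5 : (K : ℝ) * Real.log K + 1 ≤ (D - 1) / 4 * Real.log n := by linarith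
    have h6 := mul_le_mul_of_nonneg_left h5 hn0
    push_cast
    nlinarith [h6]
  have := h1.add h2
  unfold Bnd
  simpa using this

theorem statement5 (K L : ℕ) (hK : 2 ≤ K) (hL : 1 ≤ L) (a b : Fin L → ℝ)
    (ha : ∀ ℓ, 0 ≤ a ℓ) (hb : ∀ ℓ, 0 ≤ b ℓ)
    (hsep : 1 < ∑ ℓ, (Real.sqrt (a ℓ) - Real.sqrt (b ℓ)) ^ 2) :
    Filter.Tendsto (fun n => (sbm n K L a b (successEvent n K L a b)).toReal)
      Filter.atTop (nhds 1) := by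
  classical
  set D := ∑ ℓ, (Real.sqrt (a ℓ) - Real.sqrt (b ℓ)) ^ 2 with hDdef
  have hBnd := Bnd_tendsto K hK D hsep
  -- eventual hypotheses
  have htn : Tendsto (fun n : ℕ => Real.log n / n) atTop (nhds 0) := by
    have h1 : Tendsto (fun x : ℝ => Real.log x / x) atTop (nhds 0) :=
      Real.isLittleO_log_id_atTop.tendsto_div_nhds_zero
    exact h1.comp tendsto_natCast_atTop_atTop
  have hevA : ∀ᶠ n : ℕ in atTop, (∑ j, a j) * Real.log n / n ≤ 1 := by
    have h2 : Tendsto (fun n : ℕ => (∑ j, a j) * (Real.log n / n)) atTop (nhds 0) := by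
      simpa using htn.const_mul (∑ j, a j)
    filter_upwards [h2.eventually_le_const (by norm_num : (0:ℝ) < 1)] with n h
    rw [mul_div_assoc]
    exact h
  have hevB : ∀ᶠ n : ℕ in atTop, (∑ j, b j) * Real.log n / n ≤ 1 := by
    have h2 : Tendsto (fun n : ℕ => (∑ j, b j) * (Real.log n / n)) atTop (nhds 0) := by
      simpa using htn.const_mul (∑ j, b j)
    filter_upwards [h2.eventually_le_const (by norm_num : (0:ℝ) < 1)] with n h
    rw [mul_div_assoc]
    exact h
  have hev : ∀ᶠ n : ℕ in atTop,
      1 - Bnd K D n ≤ (sbm n K L a b (successEvent n K L a b)).toReal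
        ∧ (sbm n K L a b (successEvent n K L a b)).toReal ≤ 1 := by
    filter_upwards [hevA, hevB, Filter.eventually_ge_atTop 1] with n hA hB hn
    have hFa : ∀ x, 0 ≤ F L a n x := F_nonneg L ha hn hA
    have hFb : ∀ x, 0 ≤ F L b n x := F_nonneg L hb hn hB
    have huniv : sbm n K L a b Set.univ = 1 := sbm_univ n K L a b hFa hFb
    have hles : sbm n K L a b (successEvent n K L a b) ≤ 1 := by
      rw [← huniv]
      exact measure_mono (Set.subset_univ _)
    constructor
    · have hmb := main_bound n K L a b hK ha hb hsep hn hFa hFb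
      have hcompl : sbm n K L a b (successEvent n K L a b)
          = 1 - sbm n K L a b (successEvent n K L a b)ᶜ := by
        have := measure_compl (μ := sbm n K L a b)
          (meas_all (successEvent n K L a b)ᶜ) (by
            rw [← lt_top_iff_ne_top]
            calc sbm n K L a b (successEvent n K L a b)ᶜ
                ≤ sbm n K L a b Set.univ := measure_mono (Set.subset_univ _)
              _ = 1 := huniv
              _ < ⊤ := ENNReal.one_lt_top)
        rw [compl_compl] at this
        rw [this, huniv]
      have hclet : sbm n K L a b (successEvent n K L a b)ᶜ ≤ 1 := by
        rw [← huniv]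
        exact measure_mono (Set.subset_univ _)
      rw [hcompl, ENNReal.toReal_sub_of_le hclet ENNReal.one_ne_top]
      have htr : (sbm n K L a b (successEvent n K L a b)ᶜ).toReal ≤ Bnd K D n := by
        calc (sbm n K L a b (successEvent n K L a b)ᶜ).toReal
            ≤ (ENNReal.ofReal (Bnd K D n)).toReal :=
              ENNReal.toReal_mono ENNReal.ofReal_ne_top hmb
          _ = Bnd K D n := ENNReal.toReal_ofReal (Bnd_nonneg K (by omega) D n)
      simp only [ENNReal.toReal_one]
      linarith
    · calc (sbm n K L a b (successEvent n K L a b)).toReal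
          ≤ (1 : ℝ≥0∞).toReal := ENNReal.toReal_mono ENNReal.one_ne_top hles
        _ = 1 := by simp
  have hlow : Tendsto (fun n : ℕ => 1 - Bnd K D n) atTop (nhds 1) := by
    have := tendsto_const_nhds (x := (1:ℝ)) (f := atTop (α := ℕ))
    simpa using this.sub hBnd
  refine tendsto_of_tendsto_of_tendsto_of_le_of_le' hlow tendsto_const_nhds ?_ ?_
  · filter_upwards [hev] with n h using h.1
  · filter_upwards [hev] with n h using h.2

end SBM5
end
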